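/- arXiv:1310.7628 — 5 statements merged into one kernel-verified Lean document; each statement's English description precedes it below -/
import Mathlib

section
/- Let γ > 0, λ > 0, ω > 8/γ², and let ψ be the sign-changing asymmetric stationary state: ψ(x) = √(2ω/λ)·sech(√ω(x − x̄₁)) for x < 0 and ψ(x) = −√(2ω/λ)·sech(√ω(x − x̄₂)) for x > 0, where x̄₁ = (1/(2√ω))·log((1 + t₁)/(1 − t₁)), x̄₂ = −(1/(2√ω))·log((1 + t₂)/(1 − t₂)), t₁ = (1 + √(1 + γ²ω) + √(γ²ω − 2 − 2√(1 + γ²ω)))/(2γ√ω), t₂ = (1 + √(1 + γ²ω) − √(γ²ω − 2 − 2√(1 + γ²ω)))/(2γ√ω). Then: (i) ∫_ℝ ψ² dx = 4√ω/λ − (2/(λγ))√(1 + γ²ω) − 2/(λγ); (ii) E_{γδ'}(ψ) = −(2/(3λ))ω^{3/2} + ((γ²ω − 2)/(3λγ³))·√(γ²ω + 1) − 2/(3λγ³); (iii) S_ω(ψ) := E_{γδ'}(ψ) + (ω/2)∫_ℝ ψ² dx = (4/(3λ))ω^{3/2} − (2/(3λγ³))(γ²ω + 1)^{3/2} − ω/(λγ)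 − 2/(3λγ³). -/
open MeasureTheory Real Filter Set Topology

noncomputable section

/-- sech x = 1 / cosh x -/
def sech (x : ℝ) : ℝ := 1 / Real.cosh x


/-- our own tanh -/
def tnh (x : ℝ) : ℝ := Real.sinh x / Real.cosh x

lemma hasDerivAt_tnh (x : ℝ) : HasDerivAt tnh ((1 / Real.cosh x) ^ 2) x := by
  have h : HasDerivAt (fun y => Real.sinh y / Real.cosh y)
      ((Real.cosh x * Real.cosh x - Real.sinh x * Real.sinh x) / Real.cosh x ^ 2) x :=
    (Real.hasDerivAt_sinh x).div (Real.hasDerivAt_cosh x) (Real.cosh_pos x).ne'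
  have e : (Real.cosh x * Real.cosh x - Real.sinh x * Real.sinh x) / Real.cosh x ^ 2
      = (1 / Real.cosh x) ^ 2 := by
    have h1 := Real.cosh_sq_sub_sinh_sq x
    have h2 := (Real.cosh_pos x).ne'
    field_simp
    nlinarith [h1]
  rw [e] at h
  exact h

lemma tnh_neg (x : ℝ) : tnh (-x) = - tnh x := by
  simp [tnh, Real.sinh_neg, Real.cosh_neg, neg_div]

lemma tnh_sq_lt_one (x : ℝ) : (tnh x)^2 < 1 := by
  have h1 := Real.cosh_sq_sub_sinh_sq x
  have h2 := Real.cosh_pos x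
  rw [tnh, div_pow]
  rw [div_lt_one (by positivity)]
  nlinarith

lemma tnh_atTop : Tendsto tnh atTop (𝓝 1) := by
  have key : ∀ x : ℝ, tnh x = (1 - Real.exp (-(2*x))) / (1 + Real.exp (-(2*x))) := by
    intro x
    have he : Real.exp (-(2*x)) = (Real.exp x)⁻¹ * (Real.exp x)⁻¹ := by
      rw [← Real.exp_neg, ← Real.exp_add]; ring_nf
    have hx := Real.exp_pos x
    rw [tnh, Real.sinh_eq, Real.cosh_eq, he, Real.exp_neg]
    field_simp
  have hlim : Tendsto (fun x : ℝ => Real.exp (-(2*x))) atTop (𝓝 0) := by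
    apply Real.tendsto_exp_neg_atTop_nhds_zero.comp
    exact (tendsto_id.const_mul_atTop (by norm_num : (0:ℝ) < 2))
  have h2 : Tendsto (fun x : ℝ => (1 - Real.exp (-(2*x))) / (1 + Real.exp (-(2*x)))) atTop
      (𝓝 ((1 - 0) / (1 + 0))) :=
    Tendsto.div (tendsto_const_nhds.sub hlim) (tendsto_const_nhds.add hlim) (by norm_num)
  have h3 : Tendsto (fun x : ℝ => (1 - Real.exp (-(2*x))) / (1 + Real.exp (-(2*x)))) atTop (𝓝 1) := by
    simpa using h2
  exact h3.congr (fun x => (key x).symm)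

lemma tnh_atBot : Tendsto tnh atBot (𝓝 (-1)) := by
  have : Tendsto (fun x : ℝ => - tnh (-x)) atBot (𝓝 (-1)) := by
    exact ((tnh_atTop.comp tendsto_neg_atBot_atTop)).neg
  refine this.congr (fun x => ?_)
  rw [tnh_neg]; ring


lemma integrableOn_Iic_of_neg {f : ℝ → ℝ} {b : ℝ}
    (h : IntegrableOn (fun x => f (-x)) (Ioi (-b))) : IntegrableOn f (Iic b) := by
  have A : MeasurableEmbedding (fun x : ℝ => -x) :=
    (Homeomorph.neg ℝ).isClosedEmbedding.measurableEmbedding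
  have h' : IntegrableOn (fun x => f (-x)) (Ici (-b)) := by
    rwa [integrableOn_Ici_iff_integrableOn_Ioi]
  have hmap : (volume : Measure ℝ).restrict (Iic b)
      = Measure.map (fun x : ℝ => -x) ((volume : Measure ℝ).restrict (Ici (-b))) := by
    have := A.restrict_map (volume : Measure ℝ) (Iic b)
    rw [Measure.map_neg_eq_self (volume : Measure ℝ)] at this
    have hset : ((fun x : ℝ => -x) ⁻¹' Iic b) = Ici (-b) := by
      ext x
      simp only [mem_preimage, mem_Iic, mem_Ici]
      constructor <;> intro hx <;> linarith
    rw [this, hset]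
  rw [IntegrableOn, hmap, A.integrable_map_iff]
  exact h'

/-- FTC both half lines with nonneg derivative -/
lemma ftc_both {F f : ℝ → ℝ} (hd : ∀ x, HasDerivAt F (f x) x) (hpos : ∀ x, 0 ≤ f x)
    {mt mb : ℝ} (ht : Tendsto F atTop (𝓝 mt)) (hb : Tendsto F atBot (𝓝 mb)) (b : ℝ) :
    (IntegrableOn f (Ioi b) ∧ ∫ x in Ioi b, f x = mt - F b) ∧
    (IntegrableOn f (Iic b) ∧ ∫ x in Iic b, f x = F b - mb) := by
  have hIoi : IntegrableOn f (Ioi b) :=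
    integrableOn_Ioi_deriv_of_nonneg' (fun x _ => hd x) (fun x _ => hpos x) ht
  have hIoiVal : ∫ x in Ioi b, f x = mt - F b :=
    integral_Ioi_of_hasDerivAt_of_tendsto' (fun x _ => hd x) hIoi ht
  -- reflected versions
  have hdG : ∀ x, HasDerivAt (fun y => -F (-y)) (f (-x)) x := by
    intro x
    have h1 : HasDerivAt (fun y : ℝ => -y) (-1) x := hasDerivAt_neg x
    have h2 := ((hd (-x)).comp x h1).neg
    have h3 := h2; simp only [mul_neg, mul_one, neg_neg] at h3; exact h3
  have htG : Tendsto (fun y => -F (-y)) atTop (𝓝 (-mb)) :=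
    (hb.comp tendsto_neg_atTop_atBot).neg
  have hIoi' : IntegrableOn (fun x => f (-x)) (Ioi (-b)) :=
    integrableOn_Ioi_deriv_of_nonneg' (fun x _ => hdG x) (fun x _ => hpos _) htG
  have hIic : IntegrableOn f (Iic b) := integrableOn_Iic_of_neg hIoi'
  have hIoiVal' : ∫ x in Ioi (-b), f (-x) = -mb - (-F (-(-b))) :=
    integral_Ioi_of_hasDerivAt_of_tendsto' (fun x _ => hdG x) hIoi' htG
  have hIicVal : ∫ x in Iic b, f x = F b - mb := by
    have := integral_comp_neg_Iic b (fun x => f (-x))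
    simp only [neg_neg] at this hIoiVal'
    rw [← this] at hIoiVal'
    simp only [hIoiVal']
    ring
  exact ⟨⟨hIoi, hIoiVal⟩, hIic, hIicVal⟩

lemma one_sub_tnh_sq (x : ℝ) : 1 - tnh x ^ 2 = (1 / Real.cosh x) ^ 2 := by
  have h1 := Real.cosh_sq_sub_sinh_sq x
  have h2 := (Real.cosh_pos x).ne'
  rw [tnh]
  field_simp
  linarith [h1]

section aff
variable {k : ℝ} (a : ℝ) (hk : 0 < k)

lemma aff_hasDerivAt (x : ℝ) : HasDerivAt (fun x => k * (x - a)) k x := by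
  simpa using ((hasDerivAt_id x).sub_const a).const_mul k

include hk in
lemma aff_atTop : Tendsto (fun x => k * (x - a)) atTop atTop :=
  (tendsto_atTop_add_const_right atTop (-a) tendsto_id).const_mul_atTop hk

include hk in
lemma aff_atBot : Tendsto (fun x => k * (x - a)) atBot atBot :=
  (tendsto_atBot_add_const_right atBot (-a) tendsto_id).const_mul_atBot hk

include hk in
lemma tnh_aff_hasDerivAt (x : ℝ) :
    HasDerivAt (fun x => tnh (k * (x - a))) ((1 / Real.cosh (k * (x - a))) ^ 2 * k) x :=
  by have h := (hasDerivAt_tnh (k * (x - a))).comp x (aff_hasDerivAt (k := k) a x); exact h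

include hk in
/-- integral of sech^2 on the two half-lines -/
lemma sech2_int (b : ℝ) :
    (IntegrableOn (fun x => (1 / Real.cosh (k * (x - a))) ^ 2) (Ioi b) ∧
      ∫ x in Ioi b, (1 / Real.cosh (k * (x - a))) ^ 2 = (1 - tnh (k * (b - a))) / k) ∧
    (IntegrableOn (fun x => (1 / Real.cosh (k * (x - a))) ^ 2) (Iic b) ∧
      ∫ x in Iic b, (1 / Real.cosh (k * (x - a))) ^ 2 = (tnh (k * (b - a)) + 1) / k) := by
  have hd : ∀ x, HasDerivAt (fun x => tnh (k * (x - a)) / k)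
      ((1 / Real.cosh (k * (x - a))) ^ 2) x := by
    intro x
    have := (tnh_aff_hasDerivAt a hk x).div_const k
    simpa [mul_div_assoc, mul_div_cancel_right₀ _ hk.ne'] using this
  have ht : Tendsto (fun x => tnh (k * (x - a)) / k) atTop (𝓝 (1 / k)) :=
    (tnh_atTop.comp (aff_atTop a hk)).div_const k
  have hb' : Tendsto (fun x => tnh (k * (x - a)) / k) atBot (𝓝 ((-1) / k)) :=
    (tnh_atBot.comp (aff_atBot a hk)).div_const k
  have H := ftc_both hd (fun x => by positivity) ht hb' b
  constructor
  · exact ⟨H.1.1, by rw [H.1.2]; field_simp; try ring⟩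
  · exact ⟨H.2.1, by rw [H.2.2]; field_simp; try ring⟩

include hk in
/-- integral of tanh^2 sech^2 on the two half-lines -/
lemma kin_int (b : ℝ) :
    (IntegrableOn (fun x => tnh (k * (x - a)) ^ 2 * (1 / Real.cosh (k * (x - a))) ^ 2) (Ioi b) ∧
      ∫ x in Ioi b, tnh (k * (x - a)) ^ 2 * (1 / Real.cosh (k * (x - a))) ^ 2
        = (1 - tnh (k * (b - a)) ^ 3) / (3 * k)) ∧
    (IntegrableOn (fun x => tnh (k * (x - a)) ^ 2 * (1 / Real.cosh (k * (x - a))) ^ 2) (Iic b) ∧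
      ∫ x in Iic b, tnh (k * (x - a)) ^ 2 * (1 / Real.cosh (k * (x - a))) ^ 2
        = (tnh (k * (b - a)) ^ 3 + 1) / (3 * k)) := by
  have hd : ∀ x, HasDerivAt (fun x => tnh (k * (x - a)) ^ 3 / (3 * k))
      (tnh (k * (x - a)) ^ 2 * (1 / Real.cosh (k * (x - a))) ^ 2) x := by
    intro x
    have := ((tnh_aff_hasDerivAt a hk x).pow 3).div_const (3 * k)
    refine this.congr_deriv ?_
    push_cast
    field_simp
  have ht : Tendsto (fun x => tnh (k * (x - a)) ^ 3 / (3 * k)) atTop (𝓝 (1 / (3 * k))) := by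
    have := ((tnh_atTop.comp (aff_atTop a hk)).pow 3).div_const (3 * k)
    simpa using this
  have hb' : Tendsto (fun x => tnh (k * (x - a)) ^ 3 / (3 * k)) atBot
      (𝓝 ((-1) ^ 3 / (3 * k))) :=
    ((tnh_atBot.comp (aff_atBot a hk)).pow 3).div_const (3 * k)
  have H := ftc_both hd (fun x => by positivity) ht hb' b
  constructor
  · exact ⟨H.1.1, by rw [H.1.2]; field_simp; try ring⟩
  · exact ⟨H.2.1, by rw [H.2.2]; field_simp; try ring⟩

include hk in
/-- integral of sech^4 on the two half-lines -/
lemma quart_int (b : ℝ) :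
    (IntegrableOn (fun x => (1 / Real.cosh (k * (x - a))) ^ 4) (Ioi b) ∧
      ∫ x in Ioi b, (1 / Real.cosh (k * (x - a))) ^ 4
        = (2 / 3 - tnh (k * (b - a)) + tnh (k * (b - a)) ^ 3 / 3) / k) ∧
    (IntegrableOn (fun x => (1 / Real.cosh (k * (x - a))) ^ 4) (Iic b) ∧
      ∫ x in Iic b, (1 / Real.cosh (k * (x - a))) ^ 4
        = (tnh (k * (b - a)) - tnh (k * (b - a)) ^ 3 / 3 + 2 / 3) / k) := by
  have hd : ∀ x, HasDerivAt (fun x => (tnh (k * (x - a)) - tnh (k * (x - a)) ^ 3 / 3) / k)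
      ((1 / Real.cosh (k * (x - a))) ^ 4) x := by
    intro x
    have h1 := ((tnh_aff_hasDerivAt a hk x).sub
      (((tnh_aff_hasDerivAt a hk x).pow 3).div_const 3)).div_const k
    have e2 : (1 / Real.cosh (k * (x - a))) ^ 4
        = (1 / Real.cosh (k * (x - a))) ^ 2 * (1 - tnh (k * (x - a)) ^ 2) := by
      rw [one_sub_tnh_sq]; ring
    refine h1.congr_deriv ?_
    rw [e2]
    push_cast
    field_simp
  have ht : Tendsto (fun x => (tnh (k * (x - a)) - tnh (k * (x - a)) ^ 3 / 3) / k) atTop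
      (𝓝 ((1 - 1 ^ 3 / 3) / k)) := by
    have h0 := tnh_atTop.comp (aff_atTop a hk)
    exact (h0.sub ((h0.pow 3).div_const 3)).div_const k
  have hb' : Tendsto (fun x => (tnh (k * (x - a)) - tnh (k * (x - a)) ^ 3 / 3) / k) atBot
      (𝓝 ((-1 - (-1) ^ 3 / 3) / k)) := by
    exact ((tnh_atBot.comp (aff_atBot a hk)).sub
      (((tnh_atBot.comp (aff_atBot a hk)).pow 3).div_const 3)).div_const k
  have H := ftc_both hd (fun x => by positivity) ht hb' b
  constructor
  · exact ⟨H.1.1, by rw [H.1.2]; field_simp; try ring⟩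
  · exact ⟨H.2.1, by rw [H.2.2]; field_simp; try ring⟩
end aff

/-- tanh of half-log -/

lemma tnh_half_log {t : ℝ} (h1 : -1 < t) (h2 : t < 1) :
    tnh ((1 / 2) * Real.log ((1 + t) / (1 - t))) = t := by
  set y := (1 + t) / (1 - t) with hy
  have hy0 : 0 < y := div_pos (by linarith) (by linarith)
  set z := (1 / 2) * Real.log y with hz
  set w := Real.exp z with hw
  have hw0 : 0 < w := Real.exp_pos z
  have hw2 : w ^ 2 = y := by
    rw [hw, ← Real.exp_nat_mul]
    norm_num
    rw [show (2:ℝ) * z = Real.log y by rw [hz]; ring, Real.exp_log hy0]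
  have hyt : y * (1 - t) = 1 + t := by
    rw [hy, div_mul_cancel₀ _ (by intro h; nlinarith : (1 : ℝ) - t ≠ 0)]
  have hexp_neg : Real.exp (-z) = w⁻¹ := by rw [Real.exp_neg, hw]
  rw [tnh, Real.sinh_eq, Real.cosh_eq, hexp_neg, ← hw]
  have hstep : (w - w⁻¹) / 2 / ((w + w⁻¹) / 2) = (w ^ 2 - 1) / (w ^ 2 + 1) := by
    rw [div_div_div_eq]
    rw [div_eq_div_iff (by positivity) (by positivity)]
    field_simp
  rw [hstep, hw2, div_eq_iff (by positivity)]
  nlinarith [hyt]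

/-- sech in terms of tanh -/
lemma sech_eq_sqrt {z t : ℝ} (h : tnh z = t) : 1 / Real.cosh z = Real.sqrt (1 - t ^ 2) := by
  have hc := Real.cosh_pos z
  have key : (1 / Real.cosh z) ^ 2 = 1 - t ^ 2 := by
    rw [← h, tnh]
    have h1 := Real.cosh_sq_sub_sinh_sq z
    field_simp
    linarith [h1]
  rw [← key, Real.sqrt_sq (by positivity)]

set_option maxHeartbeats 1000000 in
/-- L²-norm, delta-prime energy and action of the sign-changing asymmetric stationary state
of the cubic NLS with a delta-prime interaction of strength γ, for ω > 8/γ². Here `f₁`, `f₂`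
are the two branches of ψ, so ψ(0−) = f₁ 0 and ψ(0+) = f₂ 0. -/
theorem statement13 (γ lam ω : ℝ) (hγ : 0 < γ) (hlam : 0 < lam) (hω : 8 / γ ^ 2 < ω)
    (t₁ t₂ xbar₁ xbar₂ : ℝ)
    (ht₁ : t₁ = (1 + Real.sqrt (1 + γ ^ 2 * ω)
        + Real.sqrt (γ ^ 2 * ω - 2 - 2 * Real.sqrt (1 + γ ^ 2 * ω)))
      / (2 * γ * Real.sqrt ω))
    (ht₂ : t₂ = (1 + Real.sqrt (1 + γ ^ 2 * ω)
        - Real.sqrt (γ ^ 2 * ω - 2 - 2 * Real.sqrt (1 + γ ^ 2 * ω)))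
      / (2 * γ * Real.sqrt ω))
    (hxbar₁ : xbar₁ = (1 / (2 * Real.sqrt ω)) * Real.log ((1 + t₁) / (1 - t₁)))
    (hxbar₂ : xbar₂ = -(1 / (2 * Real.sqrt ω)) * Real.log ((1 + t₂) / (1 - t₂)))
    (f₁ f₂ ψ : ℝ → ℝ)
    (hf₁ : ∀ x, f₁ x = Real.sqrt (2 * ω / lam) * sech (Real.sqrt ω * (x - xbar₁)))
    (hf₂ : ∀ x, f₂ x = -(Real.sqrt (2 * ω / lam) * sech (Real.sqrt ω * (x - xbar₂))))
    (hψ : ∀ x, ψ x = if x < 0 then f₁ x else f₂ x) :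
    (∫ x : ℝ, (ψ x) ^ 2)
      = 4 * Real.sqrt ω / lam - (2 / (lam * γ)) * Real.sqrt (1 + γ ^ 2 * ω) - 2 / (lam * γ) ∧
    (1 / 2) * (∫ x in ({(0:ℝ)}ᶜ : Set ℝ), (deriv ψ x) ^ 2)
        - (1 / (2 * γ)) * (f₂ 0 - f₁ 0) ^ 2 - (lam / 4) * (∫ x : ℝ, (ψ x) ^ 4)
      = -(2 / (3 * lam)) * ω ^ ((3:ℝ)/2)
        + ((γ ^ 2 * ω - 2) / (3 * lam * γ ^ 3)) * Real.sqrt (γ ^ 2 * ω + 1)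
        - 2 / (3 * lam * γ ^ 3) ∧
    ((1 / 2) * (∫ x in ({(0:ℝ)}ᶜ : Set ℝ), (deriv ψ x) ^ 2)
        - (1 / (2 * γ)) * (f₂ 0 - f₁ 0) ^ 2 - (lam / 4) * (∫ x : ℝ, (ψ x) ^ 4))
        + (ω / 2) * (∫ x : ℝ, (ψ x) ^ 2)
      = (4 / (3 * lam)) * ω ^ ((3:ℝ)/2)
        - (2 / (3 * lam * γ ^ 3)) * (γ ^ 2 * ω + 1) ^ ((3:ℝ)/2)
        - ω / (lam * γ) - 2 / (3 * lam * γ ^ 3) := by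
  have hω0 : 0 < ω := lt_trans (by positivity) hω
  -- rewrite γ^2*ω+1 into 1+γ^2*ω everywhere
  rw [show γ ^ 2 * ω + 1 = 1 + γ ^ 2 * ω by ring]
  set k := Real.sqrt ω with hkdef
  have hk : 0 < k := Real.sqrt_pos.mpr hω0
  have hk2 : k ^ 2 = ω := Real.sq_sqrt hω0.le
  set r := Real.sqrt (1 + γ ^ 2 * ω) with hrdef
  have hr0 : 0 ≤ r := Real.sqrt_nonneg _
  have hR : r ^ 2 = 1 + γ ^ 2 * k ^ 2 := by
    rw [hrdef, Real.sq_sqrt (by positivity), hk2]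
  have hg : 8 < γ ^ 2 * ω := by
    rw [div_lt_iff₀ (by positivity)] at hω; linarith
  have hg' : 8 < γ ^ 2 * k ^ 2 := by rw [hk2]; exact hg
  have hrle : 2 * r ≤ γ ^ 2 * ω - 2 := by
    have h1 : (1 + γ ^ 2 * ω) ≤ ((γ ^ 2 * ω - 2) / 2) ^ 2 := by nlinarith
    have h2 : r ≤ (γ ^ 2 * ω - 2) / 2 := by
      rw [hrdef]
      calc Real.sqrt (1 + γ ^ 2 * ω) ≤ Real.sqrt (((γ ^ 2 * ω - 2) / 2) ^ 2) :=
            Real.sqrt_le_sqrt h1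
        _ = (γ ^ 2 * ω - 2) / 2 := Real.sqrt_sq (by nlinarith)
    linarith
  set q := Real.sqrt (γ ^ 2 * ω - 2 - 2 * r) with hqdef
  have hq0 : 0 ≤ q := Real.sqrt_nonneg _
  have hq2 : q ^ 2 = γ ^ 2 * k ^ 2 - 2 - 2 * r := by
    rw [hqdef, Real.sq_sqrt (by linarith), hk2]
  -- basic bounds on t₁ t₂
  have hs : 0 < γ * k := by positivity
  have hrs : γ * k < r := by nlinarith [hR, hr0, hs]
  have hsgt2 : 2 < γ * k := by nlinarith [hg', hs]
  have hq_lt : q < 1 + r := by nlinarith [hq2, hq0, hr0, hR]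
  have h2s1 : r < 2 * (γ * k) - 1 := by nlinarith [hR, hr0, hsgt2]
  have hq_lt2 : q < 2 * (γ * k) - 1 - r := by
    nlinarith [hq2, hq0, hrs, hr0, hsgt2, hR, mul_pos (add_pos_of_nonneg_of_pos hr0 one_pos) (sub_pos.mpr hrs)]
  have ht1pos : 0 < t₁ := by
    rw [ht₁]; exact div_pos (by positivity) (by positivity)
  have ht2pos : 0 < t₂ := by
    rw [ht₂]; apply div_pos (by linarith) (by positivity)
  have ht1lt1 : t₁ < 1 := by
    rw [ht₁, div_lt_one (by positivity)]; linarith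
  have ht2lt1 : t₂ < 1 := by
    rw [ht₂, div_lt_one (by positivity)]; linarith
  have hS : t₁ + t₂ = (1 + r) / (γ * k) := by
    rw [ht₁, ht₂]; field_simp; ring
  have hP : t₁ * t₂ = (1 + r) / (γ * k) ^ 2 := by
    rw [ht₁, ht₂]
    rw [div_mul_div_comm]
    rw [show (1 + r + q) * (1 + r - q) = 4 * (1 + r) by linear_combination hR - hq2]
    rw [show 2 * γ * k * (2 * γ * k) = 4 * (γ * k) ^ 2 by ring]
    field_simp
  have hU : t₁ ^ 3 + t₂ ^ 3 = (1 + r) ^ 2 * (r - 2) / (γ * k) ^ 3 := by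
    linear_combination ((t₁ + t₂) ^ 2 + (t₁ + t₂) * ((1 + r) / (γ * k))
        + ((1 + r) / (γ * k)) ^ 2 - 3 * ((1 + r) / (γ * k) ^ 2)) * hS
      + (-3 * (t₁ + t₂)) * hP
  have hT : t₁ ^ 2 + t₂ ^ 2 = 1 := by
    have e : t₁ ^ 2 + t₂ ^ 2 = (t₁ + t₂) ^ 2 - 2 * (t₁ * t₂) := by ring
    rw [e, hS, hP]
    field_simp
    linear_combination hR
  -- the amplitude
  set c := Real.sqrt (2 * ω / lam) with hcdef
  have hc0 : 0 ≤ c := Real.sqrt_nonneg _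
  have hC : c ^ 2 = 2 * k ^ 2 / lam := by
    rw [hcdef, Real.sq_sqrt (by positivity), hk2]
  -- tanh values at the matching point
  have hz1 : k * (0 - xbar₁) = -((1 / 2) * Real.log ((1 + t₁) / (1 - t₁))) := by
    rw [hxbar₁]; field_simp; ring
  have hz2 : k * (0 - xbar₂) = (1 / 2) * Real.log ((1 + t₂) / (1 - t₂)) := by
    rw [hxbar₂]; field_simp; ring
  have htnh1 : tnh (k * (0 - xbar₁)) = -t₁ := by
    rw [hz1, tnh_neg, tnh_half_log (by linarith) ht1lt1]
  have htnh2 : tnh (k * (0 - xbar₂)) = t₂ := by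
    rw [hz2, tnh_half_log (by linarith) ht2lt1]
  -- boundary values
  have hf10 : f₁ 0 = c * t₂ := by
    rw [hf₁ 0, sech, sech_eq_sqrt htnh1,
      show 1 - (-t₁) ^ 2 = t₂ ^ 2 by linear_combination -hT,
      Real.sqrt_sq ht2pos.le]
  have hf20 : f₂ 0 = -(c * t₁) := by
    rw [hf₂ 0, sech, sech_eq_sqrt htnh2,
      show 1 - t₂ ^ 2 = t₁ ^ 2 by linear_combination -hT,
      Real.sqrt_sq ht1pos.le]
  -- the six integrals
  have S1 := sech2_int xbar₁ hk (0:ℝ)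
  have S2 := sech2_int xbar₂ hk (0:ℝ)
  have K1 := kin_int xbar₁ hk (0:ℝ)
  have K2 := kin_int xbar₂ hk (0:ℝ)
  have Q1 := quart_int xbar₁ hk (0:ℝ)
  have Q2 := quart_int xbar₂ hk (0:ℝ)
  -- pointwise identifications on the two half lines
  have hcne : ∀ u : ℝ, Real.cosh u ≠ 0 := fun u => (Real.cosh_pos u).ne'
  have epsi1 : EqOn (fun x => (ψ x) ^ 2)
      (fun x => c ^ 2 * (1 / Real.cosh (k * (x - xbar₁))) ^ 2) (Iio 0) := by
    intro x hx
    simp only [hψ x, if_pos (mem_Iio.mp hx), hf₁ x, sech]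
    ring
  have epsi2 : EqOn (fun x => (ψ x) ^ 2)
      (fun x => c ^ 2 * (1 / Real.cosh (k * (x - xbar₂))) ^ 2) (Ici 0) := by
    intro x hx
    simp only [hψ x, if_neg (not_lt.mpr (mem_Ici.mp hx)), hf₂ x, sech]
    ring
  have epsi41 : EqOn (fun x => (ψ x) ^ 4)
      (fun x => c ^ 4 * (1 / Real.cosh (k * (x - xbar₁))) ^ 4) (Iio 0) := by
    intro x hx
    simp only [hψ x, if_pos (mem_Iio.mp hx), hf₁ x, sech]
    ring
  have epsi42 : EqOn (fun x => (ψ x) ^ 4)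
      (fun x => c ^ 4 * (1 / Real.cosh (k * (x - xbar₂))) ^ 4) (Ici 0) := by
    intro x hx
    simp only [hψ x, if_neg (not_lt.mpr (mem_Ici.mp hx)), hf₂ x, sech]
    ring
  -- derivatives
  have hf1d : ∀ x : ℝ, HasDerivAt f₁
      (c * (-(Real.sinh (k * (x - xbar₁)) * k) / Real.cosh (k * (x - xbar₁)) ^ 2)) x := by
    intro x
    have hcosh : HasDerivAt (fun x => Real.cosh (k * (x - xbar₁)))
        (Real.sinh (k * (x - xbar₁)) * k) x :=
      (Real.hasDerivAt_cosh _).comp x (aff_hasDerivAt xbar₁ x)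
    have hinv := (hcosh.inv (hcne _)).const_mul c
    refine hinv.congr_of_eventuallyEq (Filter.Eventually.of_forall fun y => ?_)
    rw [hf₁ y, sech, one_div]
    rfl
  have hf2d : ∀ x : ℝ, HasDerivAt f₂
      (-(c * (-(Real.sinh (k * (x - xbar₂)) * k) / Real.cosh (k * (x - xbar₂)) ^ 2))) x := by
    intro x
    have hcosh : HasDerivAt (fun x => Real.cosh (k * (x - xbar₂)))
        (Real.sinh (k * (x - xbar₂)) * k) x :=
      (Real.hasDerivAt_cosh _).comp x (aff_hasDerivAt xbar₂ x)
    have hinv := ((hcosh.inv (hcne _)).const_mul c).neg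
    refine hinv.congr_of_eventuallyEq (Filter.Eventually.of_forall fun y => ?_)
    rw [hf₂ y, sech, one_div]
    rfl
  have ederiv1 : EqOn (fun x => (deriv ψ x) ^ 2)
      (fun x => c ^ 2 * k ^ 2 * (tnh (k * (x - xbar₁)) ^ 2
        * (1 / Real.cosh (k * (x - xbar₁))) ^ 2)) (Iio 0) := by
    intro x hx
    have hloc : ψ =ᶠ[nhds x] f₁ := by
      filter_upwards [Iio_mem_nhds (mem_Iio.mp hx)] with y hy
      rw [hψ y, if_pos (mem_Iio.mp hy)]
    have : deriv ψ x = c * (-(Real.sinh (k * (x - xbar₁)) * k) / Real.cosh (k * (x - xbar₁)) ^ 2) := by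
      rw [hloc.deriv_eq, (hf1d x).deriv]
    simp only [this, tnh]
    field_simp
  have ederiv2 : EqOn (fun x => (deriv ψ x) ^ 2)
      (fun x => c ^ 2 * k ^ 2 * (tnh (k * (x - xbar₂)) ^ 2
        * (1 / Real.cosh (k * (x - xbar₂))) ^ 2)) (Ioi 0) := by
    intro x hx
    have hloc : ψ =ᶠ[nhds x] f₂ := by
      filter_upwards [Ioi_mem_nhds (mem_Ioi.mp hx)] with y hy
      rw [hψ y, if_neg (not_lt.mpr (le_of_lt (mem_Ioi.mp hy)))]
    have : deriv ψ x
        = -(c * (-(Real.sinh (k * (x - xbar₂)) * k) / Real.cosh (k * (x - xbar₂)) ^ 2)) := by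
      rw [hloc.deriv_eq, (hf2d x).deriv]
    simp only [this, tnh]
    field_simp
  -- integrability
  have Ipsi1 : IntegrableOn (fun x => (ψ x) ^ 2) (Iio 0) := by
    have h1 : IntegrableOn (fun x => c ^ 2 * (1 / Real.cosh (k * (x - xbar₁))) ^ 2) (Iic 0) :=
      S1.2.1.const_mul _
    exact (h1.mono_set Iio_subset_Iic_self).congr_fun epsi1.symm measurableSet_Iio
  have Ipsi2 : IntegrableOn (fun x => (ψ x) ^ 2) (Ici 0) := by
    have h1 : IntegrableOn (fun x => c ^ 2 * (1 / Real.cosh (k * (x - xbar₂))) ^ 2) (Ici 0) :=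
      (Iff.mpr integrableOn_Ici_iff_integrableOn_Ioi S2.1.1).const_mul _
    exact h1.congr_fun epsi2.symm measurableSet_Ici
  have Ipsi41 : IntegrableOn (fun x => (ψ x) ^ 4) (Iio 0) := by
    have h1 : IntegrableOn (fun x => c ^ 4 * (1 / Real.cosh (k * (x - xbar₁))) ^ 4) (Iic 0) :=
      Q1.2.1.const_mul _
    exact (h1.mono_set Iio_subset_Iic_self).congr_fun epsi41.symm measurableSet_Iio
  have Ipsi42 : IntegrableOn (fun x => (ψ x) ^ 4) (Ici 0) := by
    have h1 : IntegrableOn (fun x => c ^ 4 * (1 / Real.cosh (k * (x - xbar₂))) ^ 4) (Ici 0) :=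
      (Iff.mpr integrableOn_Ici_iff_integrableOn_Ioi Q2.1.1).const_mul _
    exact h1.congr_fun epsi42.symm measurableSet_Ici
  have Ider1 : IntegrableOn (fun x => (deriv ψ x) ^ 2) (Iio 0) := by
    have h1 : IntegrableOn (fun x => c ^ 2 * k ^ 2 * (tnh (k * (x - xbar₁)) ^ 2
        * (1 / Real.cosh (k * (x - xbar₁))) ^ 2)) (Iic 0) := K1.2.1.const_mul _
    exact (h1.mono_set Iio_subset_Iic_self).congr_fun ederiv1.symm measurableSet_Iio
  have Ider2 : IntegrableOn (fun x => (deriv ψ x) ^ 2) (Ioi 0) := by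
    have h1 : IntegrableOn (fun x => c ^ 2 * k ^ 2 * (tnh (k * (x - xbar₂)) ^ 2
        * (1 / Real.cosh (k * (x - xbar₂))) ^ 2)) (Ioi 0) := K2.1.1.const_mul _
    exact h1.congr_fun ederiv2.symm measurableSet_Ioi
  -- the three integral values
  have hmass : (∫ x : ℝ, (ψ x) ^ 2)
      = c ^ 2 * ((-t₁ + 1) / k) + c ^ 2 * ((1 - t₂) / k) := by
    rw [← intervalIntegral.integral_Iio_add_Ici Ipsi1 Ipsi2]
    congr 1
    · rw [setIntegral_congr_fun measurableSet_Iio epsi1, ← integral_Iic_eq_integral_Iio,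
        MeasureTheory.integral_const_mul, S1.2.2, htnh1]
    · rw [setIntegral_congr_fun measurableSet_Ici epsi2, integral_Ici_eq_integral_Ioi,
        MeasureTheory.integral_const_mul, S2.1.2, htnh2]
  have hquart : (∫ x : ℝ, (ψ x) ^ 4)
      = c ^ 4 * ((-t₁ - (-t₁) ^ 3 / 3 + 2 / 3) / k)
        + c ^ 4 * ((2 / 3 - t₂ + t₂ ^ 3 / 3) / k) := by
    rw [← intervalIntegral.integral_Iio_add_Ici Ipsi41 Ipsi42]
    congr 1
    · rw [setIntegral_congr_fun measurableSet_Iio epsi41, ← integral_Iic_eq_integral_Iio,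
        MeasureTheory.integral_const_mul, Q1.2.2, htnh1]
    · rw [setIntegral_congr_fun measurableSet_Ici epsi42, integral_Ici_eq_integral_Ioi,
        MeasureTheory.integral_const_mul, Q2.1.2, htnh2]
  have hkin : (∫ x in ({(0:ℝ)}ᶜ : Set ℝ), (deriv ψ x) ^ 2)
      = c ^ 2 * k ^ 2 * (((-t₁) ^ 3 + 1) / (3 * k))
        + c ^ 2 * k ^ 2 * ((1 - t₂ ^ 3) / (3 * k)) := by
    rw [← Set.Iio_union_Ioi,
      setIntegral_union ((Iic_disjoint_Ioi le_rfl).mono_left Iio_subset_Iic_self)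
        measurableSet_Ioi Ider1 Ider2]
    congr 1
    · rw [setIntegral_congr_fun measurableSet_Iio ederiv1, ← integral_Iic_eq_integral_Iio,
        MeasureTheory.integral_const_mul, K1.2.2, htnh1]
    · rw [setIntegral_congr_fun measurableSet_Ioi ederiv2,
        MeasureTheory.integral_const_mul, K2.1.2, htnh2]
  -- powers
  have h32 : ω ^ ((3:ℝ)/2) = k ^ 3 := by
    rw [← hk2, ← Real.rpow_natCast k 2, ← Real.rpow_mul hk.le,
      show ((2:ℕ):ℝ) * ((3:ℝ)/2) = ((3:ℕ):ℝ) by push_cast; norm_num,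
      Real.rpow_natCast]
  have h32r : (1 + γ ^ 2 * ω) ^ ((3:ℝ)/2) = r ^ 3 := by
    rw [show (1 + γ ^ 2 * ω) = r ^ 2 by rw [hR, hk2], ← Real.rpow_natCast r 2,
      ← Real.rpow_mul hr0,
      show ((2:ℕ):ℝ) * ((3:ℝ)/2) = ((3:ℕ):ℝ) by push_cast; norm_num,
      Real.rpow_natCast]
  rw [hmass, hquart, hkin, hf10, hf20, h32, h32r, ← hk2]
  have hk0 : k ≠ 0 := hk.ne'
  have hγ0 : γ ≠ 0 := hγ.ne'
  have hlam0 : lam ≠ 0 := hlam.ne'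
  refine ⟨?_, ?_, ?_⟩
  · linear_combination (norm := (field_simp; ring)) ((2 - t₁ - t₂) / k) * hC + (-(2 * k) / lam) * hS
  · linear_combination (norm := (field_simp; ring))
      (k * (2 - (t₁ ^ 3 + t₂ ^ 3)) / 6 - (t₁ + t₂) ^ 2 / (2 * γ)
        - (lam / (4 * k)) * (4 / 3 - (t₁ + t₂) + (t₁ ^ 3 + t₂ ^ 3) / 3)
          * (c ^ 2 + 2 * k ^ 2 / lam)) * hC
      + (-(2 * k ^ 3) / (3 * lam)) * hU
      + (-(k ^ 2 * ((t₁ + t₂) + (1 + r) / (γ * k))) / (lam * γ) + k ^ 3 / lam) * hS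
      + ((-(2 * r) - 3) / (3 * lam * γ ^ 3)) * hR
  · linear_combination (norm := (field_simp; ring))
      (k * (2 - (t₁ ^ 3 + t₂ ^ 3)) / 6 - (t₁ + t₂) ^ 2 / (2 * γ)
        - (lam / (4 * k)) * (4 / 3 - (t₁ + t₂) + (t₁ ^ 3 + t₂ ^ 3) / 3)
          * (c ^ 2 + 2 * k ^ 2 / lam)
        + (k ^ 2 / 2) * ((2 - t₁ - t₂) / k)) * hC
      + (-(2 * k ^ 3) / (3 * lam)) * hU
      + (-(k ^ 2 * ((t₁ + t₂) + (1 + r) / (γ * k))) / (lam * γ) + k ^ 3 / lam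
          + (k ^ 2 / lam) * (-k)) * hS
      + ((-(2 * r) - 3) / (3 * lam * γ ^ 3) + 2 * r / (3 * lam * γ ^ 3)) * hR

end
end

section
/- Let γ > 0 and λ > 0, and define for ω > 0: S⁰(ω) := (4/(3λ))ω^{3/2}; S⁺(ω) := (4/(3λ))ω^{3/2} + (2/(3λγ³))(γ²ω + 1)^{3/2} − ω/(λγ) − 2/(3λγ³); Sᵃ(ω) := 16/(3γ³λ) − 4ω/(γλ) + (4/(3λ))ω^{3/2}; S⁻(ω) := (4/(3λ))ω^{3/2} − (2/(3λγ³))(γ²ω + 1)^{3/2} − ω/(λγ) − 2/(3λγ³). Then: (1) S⁰(ω) < S⁺(ω) for every ω > 0; (2) Sᵃ(ω) < S⁰(ω) for every ω > 4/γ²; (3) S⁻(ω) < Sᵃ(ω) for every ω > 8/γ². Consequently, for ω > 8/γ², S⁻(ω) < Sᵃ(ω) < S⁰(ω) < S⁺(ω). -/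
open Real

lemma sq_rpow32 (x : ℝ) (hx : 0 ≤ x) :
    ((x + 1) ^ ((3:ℝ)/2)) ^ 2 = (x + 1) ^ 3 := by
  have h : (0:ℝ) ≤ x + 1 := by linarith
  rw [← Real.rpow_natCast ((x+1) ^ ((3:ℝ)/2)) 2, ← Real.rpow_mul h,
    ← Real.rpow_natCast (x+1) 3]
  norm_num

lemma key1 (x : ℝ) (hx : 0 < x) : 1 + 3 * x / 2 < (x + 1) ^ ((3:ℝ)/2) := by
  have hb : (0:ℝ) ≤ (x + 1) ^ ((3:ℝ)/2) := Real.rpow_nonneg (by linarith) _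
  have hsq := sq_rpow32 x hx.le
  refine lt_of_pow_lt_pow_left₀ 2 hb ?_
  rw [hsq]; nlinarith [sq_nonneg x]

lemma key2 (x : ℝ) (hx : 8 < x) : 9 * x - 18 < 2 * ((x + 1) ^ ((3:ℝ)/2)) := by
  have hb : (0:ℝ) ≤ (x + 1) ^ ((3:ℝ)/2) := Real.rpow_nonneg (by linarith) _
  have hsq := sq_rpow32 x (by linarith)
  refine lt_of_pow_lt_pow_left₀ 2 (by linarith) ?_
  have : (2 * ((x + 1) ^ ((3:ℝ)/2))) ^ 2 = 4 * (x+1)^3 := by rw [mul_pow, hsq]; ring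
  rw [this]; nlinarith [sq_nonneg (x - 8), mul_pos (mul_pos (sub_pos.2 hx) (sub_pos.2 hx)) (show (0:ℝ) < 4*x-5 by linarith)]

noncomputable section

/-- Ordering of the actions of the four families of stationary states of the cubic NLS with
a delta-prime interaction of strength γ and nonlinearity coefficient λ. -/
theorem statement14 (γ lam : ℝ) (hγ : 0 < γ) (hlam : 0 < lam)
    (S0 Sp Sa Sm : ℝ → ℝ)
    (hS0 : ∀ ω, S0 ω = (4 / (3 * lam)) * ω ^ ((3:ℝ)/2))
    (hSp : ∀ ω, Sp ω = (4 / (3 * lam)) * ω ^ ((3:ℝ)/2)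
      + (2 / (3 * lam * γ ^ 3)) * (γ ^ 2 * ω + 1) ^ ((3:ℝ)/2)
      - ω / (lam * γ) - 2 / (3 * lam * γ ^ 3))
    (hSa : ∀ ω, Sa ω = 16 / (3 * γ ^ 3 * lam) - 4 * ω / (γ * lam)
      + (4 / (3 * lam)) * ω ^ ((3:ℝ)/2))
    (hSm : ∀ ω, Sm ω = (4 / (3 * lam)) * ω ^ ((3:ℝ)/2)
      - (2 / (3 * lam * γ ^ 3)) * (γ ^ 2 * ω + 1) ^ ((3:ℝ)/2)
      - ω / (lam * γ) - 2 / (3 * lam * γ ^ 3)) :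
    (∀ ω : ℝ, 0 < ω → S0 ω < Sp ω) ∧
    (∀ ω : ℝ, 4 / γ ^ 2 < ω → Sa ω < S0 ω) ∧
    (∀ ω : ℝ, 8 / γ ^ 2 < ω → Sm ω < Sa ω) ∧
    (∀ ω : ℝ, 8 / γ ^ 2 < ω → Sm ω < Sa ω ∧ Sa ω < S0 ω ∧ S0 ω < Sp ω) := by
  have hγ2 : (0:ℝ) < γ ^ 2 := by positivity
  have hγ3 : (0:ℝ) < γ ^ 3 := by positivity
  have hc : (0:ℝ) < 2 / (3 * lam * γ ^ 3) := by positivity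
  have h1 : ∀ ω : ℝ, 0 < ω → S0 ω < Sp ω := by
    intro ω hω
    rw [hS0, hSp]
    have hx : 0 < γ ^ 2 * ω := by positivity
    have hk := key1 (γ ^ 2 * ω) hx
    have heq : ω / (lam * γ) + 2 / (3 * lam * γ ^ 3)
        = (2 / (3 * lam * γ ^ 3)) * (1 + 3 * (γ ^ 2 * ω) / 2) := by
      field_simp; ring
    nlinarith [mul_lt_mul_of_pos_left hk hc]
  have h2 : ∀ ω : ℝ, 4 / γ ^ 2 < ω → Sa ω < S0 ω := by
    intro ω hω
    rw [hS0, hSa]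
    have hω4 : 4 < γ ^ 2 * ω := by
      rw [div_lt_iff₀ hγ2] at hω; linarith [hω]
    have h16 : 16 / (3 * γ ^ 3 * lam) < 4 * ω / (γ * lam) := by
      rw [div_lt_div_iff₀ (by positivity) (by positivity)]
      nlinarith [mul_pos hγ hlam, mul_pos hγ3 hlam]
    linarith
  have h3 : ∀ ω : ℝ, 8 / γ ^ 2 < ω → Sm ω < Sa ω := by
    intro ω hω
    rw [hSm, hSa]
    have hω8 : 8 < γ ^ 2 * ω := by
      rw [div_lt_iff₀ hγ2] at hω; linarith [hω]
    have hk := key2 (γ ^ 2 * ω) hω8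
    have heq : 4 * ω / (γ * lam) - ω / (lam * γ) - 2 / (3 * lam * γ ^ 3)
        - 16 / (3 * γ ^ 3 * lam)
        = (1 / (3 * lam * γ ^ 3)) * (9 * (γ ^ 2 * ω) - 18) := by
      field_simp; ring
    have hc2 : (0:ℝ) < 1 / (3 * lam * γ ^ 3) := by positivity
    have heq2 : (2 / (3 * lam * γ ^ 3)) * (γ ^ 2 * ω + 1) ^ ((3:ℝ)/2)
        = (1 / (3 * lam * γ ^ 3)) * (2 * ((γ ^ 2 * ω + 1) ^ ((3:ℝ)/2))) := by
      ring
    nlinarith [mul_lt_mul_of_pos_left hk hc2]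
  refine ⟨h1, h2, h3, fun ω hω => ⟨h3 ω hω, h2 ω ?_, h1 ω ?_⟩⟩
  · have : (4:ℝ) / γ ^ 2 < 8 / γ ^ 2 := by
      apply div_lt_div_of_pos_right (by norm_num) hγ2
    linarith
  · have h8 : (0:ℝ) < 8 / γ ^ 2 := by positivity
    linarith

end
end

section
/- Define for ρ > 0: E⁰(ρ) := −ρ³/96; E⁺(ρ) := −(5/216)ρ³ + (1/54)(ρ² + 4ρ + 16)^{3/2} − (5/36)ρ² − (4/9)ρ − 32/27; Eᵃ(ρ) := −ρ³/96 − ρ²/4 − 2ρ; E⁻(ρ) := −(5/216)ρ³ − (1/54)(ρ² + 4ρ + 16)^{3/2} − (5/36)ρ² − (4/9)ρ − 32/27. Then: (1) for every ρ > 0, Eᵃ(ρ) < E⁰(ρ) < E⁺(ρ); (2) for every ρ > 8(√2 − 1), E⁻(ρ) < Eᵃ(ρ). Consequently, for ρ > 8(√2 − 1), E⁻(ρ) < Eᵃ(ρ) < E⁰(ρ) < E⁺(ρ). -/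
open Real

noncomputable section

/-- The rpow `(3:ℝ)/2` as a cube of the square root. -/
lemma rpow_three_halves_eq (s : ℝ) (hs : 0 ≤ s) :
    s ^ ((3:ℝ)/2) = (Real.sqrt s) ^ 3 := by
  rw [Real.sqrt_eq_rpow, ← Real.rpow_natCast (s ^ ((1:ℝ)/2)) 3,
    ← Real.rpow_mul hs]
  norm_num

lemma key1_s15 (ρ : ℝ) (hρ : 0 < ρ) :
    11 * ρ ^ 3 + 120 * ρ ^ 2 + 384 * ρ + 1024
      < 16 * (Real.sqrt (ρ ^ 2 + 4 * ρ + 16)) ^ 3 := by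
  set t := Real.sqrt (ρ ^ 2 + 4 * ρ + 16) with ht
  have hs : (0:ℝ) ≤ ρ ^ 2 + 4 * ρ + 16 := by nlinarith [sq_nonneg (ρ + 2)]
  have ht2 : t ^ 2 = ρ ^ 2 + 4 * ρ + 16 := Real.sq_sqrt hs
  have htn : 0 ≤ t := Real.sqrt_nonneg _
  have hcube : 0 ≤ 16 * t ^ 3 := by positivity
  have hsq : (11 * ρ ^ 3 + 120 * ρ ^ 2 + 384 * ρ + 1024) ^ 2
      < (16 * t ^ 3) ^ 2 := by
    have : (16 * t ^ 3) ^ 2 = 256 * (ρ ^ 2 + 4 * ρ + 16) ^ 3 := by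
      rw [← ht2]; ring
    rw [this]
    nlinarith [pow_pos hρ 4, sq_nonneg ρ, hρ.le]
  exact lt_of_pow_lt_pow_left₀ 2 hcube hsq

lemma key2_s15 (ρ : ℝ) (hρ : 0 < ρ) (hq : 0 < ρ ^ 2 + 16 * ρ - 64) :
    -11 * ρ ^ 3 + 96 * ρ ^ 2 + 1344 * ρ - 1024
      < 16 * (Real.sqrt (ρ ^ 2 + 4 * ρ + 16)) ^ 3 := by
  set t := Real.sqrt (ρ ^ 2 + 4 * ρ + 16) with ht
  have hs : (0:ℝ) ≤ ρ ^ 2 + 4 * ρ + 16 := by nlinarith [sq_nonneg (ρ + 2)]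
  have ht2 : t ^ 2 = ρ ^ 2 + 4 * ρ + 16 := Real.sq_sqrt hs
  have htn : 0 ≤ t := Real.sqrt_nonneg _
  have hcube : 0 ≤ 16 * t ^ 3 := by positivity
  have hsq : (-11 * ρ ^ 3 + 96 * ρ ^ 2 + 1344 * ρ - 1024) ^ 2
      < (16 * t ^ 3) ^ 2 := by
    have h1 : (16 * t ^ 3) ^ 2 = 256 * (ρ ^ 2 + 4 * ρ + 16) ^ 3 := by
      rw [← ht2]; ring
    rw [h1]
    nlinarith [mul_pos (mul_pos hρ (mul_pos hq hq)) (by linarith : (0:ℝ) < 135 * ρ + 864)]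
  exact lt_of_pow_lt_pow_left₀ 2 hcube hsq

/-- Ordering of the delta-prime energies (at γ = λ = 1) of the four families of stationary
states of the cubic NLS with a delta-prime interaction, parametrized by the squared L²
norm ρ. -/
theorem statement15 (E0 Ep Ea Em : ℝ → ℝ)
    (hE0 : ∀ ρ, E0 ρ = -ρ ^ 3 / 96)
    (hEp : ∀ ρ, Ep ρ = -(5 / 216) * ρ ^ 3
      + (1 / 54) * (ρ ^ 2 + 4 * ρ + 16) ^ ((3:ℝ)/2)
      - (5 / 36) * ρ ^ 2 - (4 / 9) * ρ - 32 / 27)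
    (hEa : ∀ ρ, Ea ρ = -ρ ^ 3 / 96 - ρ ^ 2 / 4 - 2 * ρ)
    (hEm : ∀ ρ, Em ρ = -(5 / 216) * ρ ^ 3
      - (1 / 54) * (ρ ^ 2 + 4 * ρ + 16) ^ ((3:ℝ)/2)
      - (5 / 36) * ρ ^ 2 - (4 / 9) * ρ - 32 / 27) :
    (∀ ρ : ℝ, 0 < ρ → Ea ρ < E0 ρ ∧ E0 ρ < Ep ρ) ∧
    (∀ ρ : ℝ, 8 * (Real.sqrt 2 - 1) < ρ → Em ρ < Ea ρ) ∧
    (∀ ρ : ℝ, 8 * (Real.sqrt 2 - 1) < ρ →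
      Em ρ < Ea ρ ∧ Ea ρ < E0 ρ ∧ E0 ρ < Ep ρ) := by
  have hsqrt2 : (1:ℝ) < Real.sqrt 2 := by
    nlinarith [Real.sq_sqrt (by norm_num : (0:ℝ) ≤ 2), Real.sqrt_nonneg 2]
  have hpart1 : ∀ ρ : ℝ, 0 < ρ → Ea ρ < E0 ρ ∧ E0 ρ < Ep ρ := by
    intro ρ hρ
    have hs : (0:ℝ) ≤ ρ ^ 2 + 4 * ρ + 16 := by nlinarith [sq_nonneg (ρ + 2)]
    have hr := rpow_three_halves_eq _ hs
    constructor
    · rw [hEa, hE0]; nlinarith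
    · rw [hE0, hEp, hr]
      have := key1_s15 ρ hρ
      nlinarith
  refine ⟨hpart1, ?_, ?_⟩ <;> intro ρ hρ'
  all_goals {
    have hρ : 0 < ρ := lt_trans (by nlinarith) hρ'
    have hq : 0 < ρ ^ 2 + 16 * ρ - 64 := by
      have h8 : 8 * Real.sqrt 2 < ρ + 8 := by linarith
      have h2 : (8 * Real.sqrt 2) ^ 2 = 128 := by
        rw [mul_pow, Real.sq_sqrt (by norm_num : (0:ℝ) ≤ 2)]; norm_num
      nlinarith [Real.sqrt_nonneg 2]
    have hs : (0:ℝ) ≤ ρ ^ 2 + 4 * ρ + 16 := by nlinarith [sq_nonneg (ρ + 2)]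
    have hr := rpow_three_halves_eq _ hs
    have hma : Em ρ < Ea ρ := by
      rw [hEm, hEa, hr]
      have := key2_s15 ρ hρ hq
      nlinarith
    first
    | exact hma
    | exact ⟨hma, (hpart1 ρ hρ).1, (hpart1 ρ hρ).2⟩
  }

end
end

section
/- Fix γ > 0 and ρ > 0. For λ > 0, set √ω_λ := λρ/4 + 2/γ, x̄_λ := (1/(2√ω_λ))·log((γ√ω_λ + 2)/(γ√ω_λ − 2)), and define the antisymmetric stationary state φ_λ(x) := −√(2ω_λ/λ)·sech(√ω_λ(x − x̄_λ)) for x < 0 and φ_λ(x) := √(2ω_λ/λ)·sech(√ω_λ(x + x̄_λ)) for x > 0. Let g(x) := sgn(x)·√(2ρ/γ)·e^{−(2/γ)|x|}. Then, as λ → 0+, ∫_ℝ |φ_λ(x) − g(x)|² dx + ∫_{ℝ∖{0}} |φ_λ'(x) − g'(x)|² dx → 0; i.e., φ_λ converges strongly in H¹(ℝ⁻) ⊕ H¹(ℝ⁺) to the linear ground state of the delta-prime Hamiltonian of mass ρ. -/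
open MeasureTheory Real Filter Set Topology

noncomputable section

namespace Stmt16

/-- denominator of the closed form of the stationary state -/
def den (γ σ x : ℝ) : ℝ :=
  Real.exp (σ * x) * Real.sqrt (γ * σ + 2)
    + Real.exp (-(σ * x)) * ((γ * σ - 2) / Real.sqrt (γ * σ + 2))

def Fa (γ ρ σ x : ℝ) : ℝ := 2 * σ * Real.sqrt (γ * ρ / 2) / den γ σ x

def Fda (γ ρ σ x : ℝ) : ℝ :=
  -(2 * σ * Real.sqrt (γ * ρ / 2) *
    (σ * Real.exp (σ * x) * Real.sqrt (γ * σ + 2)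
      - σ * Real.exp (-(σ * x)) * ((γ * σ - 2) / Real.sqrt (γ * σ + 2))))
    / (den γ σ x) ^ 2

lemma sqrt_ge_two {γ σ : ℝ} (h2 : 2 ≤ γ * σ) : 2 ≤ Real.sqrt (γ * σ + 2) := by
  have : (2:ℝ) = Real.sqrt 4 := by
    rw [show (4:ℝ) = 2^2 by norm_num, Real.sqrt_sq]; norm_num
  rw [this]
  exact Real.sqrt_le_sqrt (by linarith)

lemma den_ge {γ σ x : ℝ} (h2 : 2 ≤ γ * σ) :
    Real.exp (σ * x) * 2 ≤ den γ σ x := by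
  have ha : 2 ≤ Real.sqrt (γ * σ + 2) := sqrt_ge_two h2
  have h0 : (0:ℝ) < Real.sqrt (γ * σ + 2) := by linarith
  have hb : 0 ≤ Real.exp (-(σ * x)) * ((γ * σ - 2) / Real.sqrt (γ * σ + 2)) := by
    apply mul_nonneg (Real.exp_pos _).le
    exact div_nonneg (by linarith) h0.le
  have : Real.exp (σ * x) * 2 ≤ Real.exp (σ * x) * Real.sqrt (γ * σ + 2) :=
    mul_le_mul_of_nonneg_left ha (Real.exp_pos _).le
  unfold den; linarith

lemma den_pos {γ σ x : ℝ} (h2 : 2 ≤ γ * σ) : 0 < den γ σ x :=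
  lt_of_lt_of_le (by positivity) (den_ge h2)

lemma hasDerivAt_den (γ σ x : ℝ) :
    HasDerivAt (fun y => den γ σ y)
      (σ * Real.exp (σ * x) * Real.sqrt (γ * σ + 2)
        - σ * Real.exp (-(σ * x)) * ((γ * σ - 2) / Real.sqrt (γ * σ + 2))) x := by
  have h1 : HasDerivAt (fun y : ℝ => σ * y) σ x := by
    simpa using (hasDerivAt_id x).const_mul σ
  have h2 : HasDerivAt (fun y : ℝ => -(σ * y)) (-σ) x := h1.neg
  have e1 := h1.exp
  have e2 := h2.exp
  have := (e1.mul_const (Real.sqrt (γ * σ + 2))).add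
    (e2.mul_const ((γ * σ - 2) / Real.sqrt (γ * σ + 2)))
  refine this.congr_deriv ?_
  ring

lemma hasDerivAt_Fa {γ σ : ℝ} (ρ : ℝ) (h2 : 2 ≤ γ * σ) (x : ℝ) :
    HasDerivAt (fun y => Fa γ ρ σ y) (Fda γ ρ σ x) x := by
  have hden := den_pos (x := x) h2
  have := (hasDerivAt_const x (2 * σ * Real.sqrt (γ * ρ / 2))).div
    (hasDerivAt_den γ σ x) hden.ne'
  refine this.congr_deriv ?_
  unfold Fda
  ring

lemma key {γ ρ lam σ : ℝ} (hγ : 0 < γ) (hρ : 0 < ρ) (hlam : 0 < lam)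
    (hrel : σ = lam * ρ / 4 + 2 / γ) (x : ℝ) :
    Real.sqrt (2 * σ ^ 2 / lam) *
      sech (σ * (x + (1 / (2 * σ)) * Real.log ((γ * σ + 2) / (γ * σ - 2)))) =
    Fa γ ρ σ x := by
  have hσ : 0 < σ := by rw [hrel]; positivity
  have hgs : γ * σ - 2 = γ * lam * ρ / 4 := by rw [hrel]; field_simp; ring
  have hb0 : 0 < γ * σ - 2 := by rw [hgs]; positivity
  have ha0 : 0 < γ * σ + 2 := by linarith
  set a := Real.sqrt (γ * σ + 2) with ha_def
  set b := Real.sqrt (γ * σ - 2) with hb_def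
  have haP : 0 < a := Real.sqrt_pos.2 ha0
  have hbP : 0 < b := Real.sqrt_pos.2 hb0
  have hb2 : b ^ 2 = γ * σ - 2 := Real.sq_sqrt hb0.le
  have hr : 0 < (γ * σ + 2) / (γ * σ - 2) := div_pos ha0 hb0
  have harg : σ * (x + (1 / (2 * σ)) * Real.log ((γ * σ + 2) / (γ * σ - 2)))
      = σ * x + (1/2) * Real.log ((γ * σ + 2) / (γ * σ - 2)) := by
    field_simp
  have hsd : Real.sqrt ((γ * σ + 2) / (γ * σ - 2)) = a / b := Real.sqrt_div ha0.le _
  have hexp : Real.exp ((1/2) * Real.log ((γ * σ + 2) / (γ * σ - 2))) = a / b := by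
    rw [← hsd, Real.sqrt_eq_rpow, Real.rpow_def_of_pos hr, mul_comm]
  have hcoef : Real.sqrt (2 * σ ^ 2 / lam) * b = σ * Real.sqrt (γ * ρ / 2) := by
    rw [hb_def, ← Real.sqrt_mul (by positivity)]
    rw [show 2 * σ ^ 2 / lam * (γ * σ - 2) = σ ^ 2 * (γ * ρ / 2) by
      rw [hgs]; field_simp; ring]
    rw [Real.sqrt_mul (sq_nonneg σ), Real.sqrt_sq hσ.le]
  have h2coef : 2 * σ * Real.sqrt (γ * ρ / 2)
      = 2 * (Real.sqrt (2 * σ ^ 2 / lam) * b) := by rw [hcoef]; ring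
  have hE : 0 < Real.exp (σ * x) := Real.exp_pos _
  unfold sech Fa den
  rw [harg, Real.cosh_eq, h2coef]
  simp only [Real.exp_neg, Real.exp_add]
  rw [hexp, ← hb2]
  have hne1 : Real.exp (σ * x) * (a / b) + (Real.exp (σ * x) * (a / b))⁻¹ ≠ 0 := by
    positivity
  have hne2 : Real.exp (σ * x) * a + (Real.exp (σ * x))⁻¹ * (b ^ 2 / a) ≠ 0 := by
    positivity
  field_simp
  rw [show √(σ * γ + 2) = a by rw [ha_def, mul_comm σ γ]]
  ring

lemma sqrt_four : Real.sqrt 4 = 2 := by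
  rw [show (4:ℝ) = 2^2 by norm_num, Real.sqrt_sq]; norm_num

lemma coef_eq {γ ρ : ℝ} (hγ : 0 < γ) (hρ : 0 < ρ) :
    Real.sqrt (2 * ρ / γ) = (2 / γ) * Real.sqrt (γ * ρ / 2) := by
  rw [show 2 * ρ / γ = (2/γ)^2 * (γ * ρ / 2) by field_simp,
    Real.sqrt_mul (sq_nonneg _), Real.sqrt_sq (by positivity)]

lemma gs_eq {γ : ℝ} (hγ : 0 < γ) : γ * (2 / γ) = 2 := by field_simp

lemma den_lim {γ : ℝ} (hγ : 0 < γ) (x : ℝ) :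
    den γ (2/γ) x = 2 * Real.exp ((2/γ) * x) := by
  unfold den
  rw [gs_eq hγ]
  norm_num [sqrt_four]
  ring

lemma Fa_lim {γ ρ : ℝ} (hγ : 0 < γ) (hρ : 0 < ρ) (x : ℝ) :
    Fa γ ρ (2/γ) x = Real.sqrt (2 * ρ / γ) * Real.exp (-((2/γ) * x)) := by
  unfold Fa
  rw [den_lim hγ, coef_eq hγ hρ, Real.exp_neg]
  have h1 : Real.exp ((2/γ) * x) ≠ 0 := (Real.exp_pos _).ne'
  field_simp

lemma Fda_lim {γ ρ : ℝ} (hγ : 0 < γ) (hρ : 0 < ρ) (x : ℝ) :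
    Fda γ ρ (2/γ) x = -((2/γ) * (Real.sqrt (2 * ρ / γ) * Real.exp (-((2/γ) * x)))) := by
  unfold Fda
  rw [den_lim hγ, gs_eq hγ, coef_eq hγ hρ, Real.exp_neg]
  norm_num [sqrt_four]
  have h1 : Real.exp ((2/γ) * x) ≠ 0 := (Real.exp_pos _).ne'
  field_simp

lemma continuousAt_Fa {γ : ℝ} (ρ : ℝ) (hγ : 0 < γ) (x : ℝ) :
    ContinuousAt (fun σ => Fa γ ρ σ x) (2/γ) := by
  have hane : Real.sqrt (γ * (2/γ) + 2) ≠ 0 := by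
    rw [gs_eq hγ]; norm_num [sqrt_four]
  have hdc : ContinuousAt (fun σ => den γ σ x) (2/γ) := by
    apply ContinuousAt.add
    · exact (Real.continuous_exp.comp (by fun_prop)).continuousAt.mul
        ((Real.continuous_sqrt.comp (by fun_prop)).continuousAt)
    · exact (Real.continuous_exp.comp (by fun_prop)).continuousAt.mul
        (ContinuousAt.div (by fun_prop)
          ((Real.continuous_sqrt.comp (by fun_prop)).continuousAt) hane)
  have hdne : den γ (2/γ) x ≠ 0 := by
    rw [den_lim hγ]; positivity
  exact ContinuousAt.div (by fun_prop) hdc hdne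

lemma continuousAt_Fda {γ : ℝ} (ρ : ℝ) (hγ : 0 < γ) (x : ℝ) :
    ContinuousAt (fun σ => Fda γ ρ σ x) (2/γ) := by
  have hane : Real.sqrt (γ * (2/γ) + 2) ≠ 0 := by
    rw [gs_eq hγ]; norm_num [sqrt_four]
  have hdc : ContinuousAt (fun σ => den γ σ x) (2/γ) := by
    apply ContinuousAt.add
    · exact (Real.continuous_exp.comp (by fun_prop)).continuousAt.mul
        ((Real.continuous_sqrt.comp (by fun_prop)).continuousAt)
    · exact (Real.continuous_exp.comp (by fun_prop)).continuousAt.mul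
        (ContinuousAt.div (by fun_prop)
          ((Real.continuous_sqrt.comp (by fun_prop)).continuousAt) hane)
  have hdne : (den γ (2/γ) x)^2 ≠ 0 := by
    rw [den_lim hγ]; positivity
  apply ContinuousAt.div _ (hdc.pow 2) hdne
  apply ContinuousAt.neg
  apply ContinuousAt.mul (by fun_prop)
  apply ContinuousAt.sub
  · exact ((by fun_prop : ContinuousAt (fun σ : ℝ => σ * Real.exp (σ * x)) (2/γ)).mul
      ((Real.continuous_sqrt.comp (by fun_prop)).continuousAt))
  · exact ((by fun_prop : ContinuousAt (fun σ : ℝ => σ * Real.exp (-(σ * x))) (2/γ)).mul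
      (ContinuousAt.div (by fun_prop)
        ((Real.continuous_sqrt.comp (by fun_prop)).continuousAt) hane))

lemma sigma_pos {γ σ : ℝ} (hγ : 0 < γ) (h2 : 2 ≤ γ * σ) : 0 < σ := by
  by_contra h
  push_neg at h
  nlinarith

lemma Fa_nonneg {γ σ : ℝ} (ρ : ℝ) (hγ : 0 < γ) (h2 : 2 ≤ γ * σ) (x : ℝ) :
    0 ≤ Fa γ ρ σ x := by
  have hσ := sigma_pos hγ h2
  exact div_nonneg (by positivity) (den_pos h2).le

lemma Fa_le {γ ρ σ : ℝ} (hγ : 0 < γ) (h2 : 2 ≤ γ * σ) {x : ℝ} (hx : 0 ≤ x) :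
    Fa γ ρ σ x ≤ σ * Real.sqrt (γ * ρ / 2) * Real.exp (-((2/γ) * x)) := by
  have hσ := sigma_pos hγ h2
  have hσγ : 2/γ ≤ σ := by rw [div_le_iff₀ hγ]; linarith [mul_comm γ σ]
  have hden := den_pos (γ := γ) (σ := σ) (x := x) h2
  have hd2 : Real.exp ((2/γ) * x) * 2 ≤ den γ σ x := by
    refine le_trans ?_ (den_ge h2)
    have : (2/γ) * x ≤ σ * x := mul_le_mul_of_nonneg_right hσγ hx
    nlinarith [Real.exp_le_exp.2 this, Real.exp_pos ((2/γ)*x)]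
  unfold Fa
  rw [div_le_iff₀ hden]
  calc 2 * σ * Real.sqrt (γ * ρ / 2)
      = σ * Real.sqrt (γ * ρ / 2) * Real.exp (-((2/γ) * x))
        * (Real.exp ((2/γ) * x) * 2) := by
        rw [Real.exp_neg]
        field_simp
    _ ≤ _ := mul_le_mul_of_nonneg_left hd2 (by positivity)

lemma Fda_abs_le {γ ρ σ : ℝ} (hγ : 0 < γ) (h2 : 2 ≤ γ * σ) (x : ℝ) :
    |Fda γ ρ σ x| ≤ σ * Fa γ ρ σ x := by
  have hσ := sigma_pos hγ h2
  have hden := den_pos (γ := γ) (σ := σ) (x := x) h2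
  set P := σ * Real.exp (σ * x) * Real.sqrt (γ * σ + 2) with hP_def
  set Q := σ * Real.exp (-(σ * x)) * ((γ * σ - 2) / Real.sqrt (γ * σ + 2)) with hQ_def
  have hP : 0 ≤ P := by positivity
  have hQ : 0 ≤ Q := by
    apply mul_nonneg (by positivity)
    exact div_nonneg (by linarith) (Real.sqrt_nonneg _)
  have hsum : P + Q = σ * den γ σ x := by unfold den; rw [hP_def, hQ_def]; ring
  have habs : |P - Q| ≤ σ * den γ σ x := by
    rw [← hsum]
    exact abs_le.2 ⟨by linarith, by linarith⟩
  have hc₁ : 0 ≤ 2 * σ * Real.sqrt (γ * ρ / 2) := by positivity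
  unfold Fda
  rw [abs_div, abs_neg, abs_of_pos (by positivity : (0:ℝ) < (den γ σ x)^2),
    div_le_iff₀ (by positivity)]
  have hre : σ * Fa γ ρ σ x * (den γ σ x)^2
      = 2 * σ * Real.sqrt (γ * ρ / 2) * (σ * den γ σ x) := by
    unfold Fa; field_simp
  rw [hre, abs_mul, abs_of_nonneg hc₁]
  exact mul_le_mul_of_nonneg_left habs hc₁

lemma integrable_exp_neg_abs {c : ℝ} (hc : 0 < c) :
    Integrable (fun x : ℝ => Real.exp (-c * |x|)) := by
  have h1 : IntegrableOn (fun x : ℝ => Real.exp (-c * |x|)) (Ici 0) := by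
    rw [integrableOn_Ici_iff_integrableOn_Ioi]
    exact (exp_neg_integrableOn_Ioi 0 hc).congr_fun
      (fun x hx => by rw [abs_of_pos hx]) measurableSet_Ioi
  have h2 : IntegrableOn (fun x : ℝ => Real.exp (-c * |x|)) (Iic 0) := by
    have := (MeasurePreserving.integrableOn_comp_preimage
      (Measure.measurePreserving_neg (volume : Measure ℝ))
      (Homeomorph.neg ℝ).measurableEmbedding).2 h1
    simpa [Function.comp_def, abs_neg] using this
  rw [← integrableOn_univ, show (univ : Set ℝ) = Iic 0 ∪ Ici 0 from (Iic_union_Ici).symm]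
  exact h2.union h1

lemma measurable_sign' : Measurable Real.sign := by
  have : Real.sign = fun r : ℝ => if r < 0 then (-1:ℝ) else if 0 < r then 1 else 0 := by
    funext r; rfl
  rw [this]
  exact Measurable.ite measurableSet_Iio measurable_const
    (Measurable.ite measurableSet_Ioi measurable_const measurable_const)

lemma abs_sign_le (x : ℝ) : |Real.sign x| ≤ 1 := by
  rcases lt_trichotomy x 0 with h|h|h
  · rw [Real.sign_of_neg h]; norm_num
  · rw [h, Real.sign_zero]; norm_num
  · rw [Real.sign_of_pos h]; norm_num

lemma deriv_g {γ ρ : ℝ} (g : ℝ → ℝ)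
    (hg : ∀ x, g x = Real.sign x * Real.sqrt (2 * ρ / γ) * Real.exp (-(2 / γ) * |x|))
    {x : ℝ} (hx : x ≠ 0) :
    deriv g x = -((2/γ) * Real.sqrt (2 * ρ / γ) * Real.exp (-(2 / γ) * |x|)) := by
  set M := Real.sqrt (2 * ρ / γ) with hM
  rcases hx.lt_or_gt with h | h
  · have hev : g =ᶠ[𝓝 x] fun y => -(M * Real.exp ((2/γ) * y)) := by
      filter_upwards [Iio_mem_nhds h] with y hy
      rw [hg y, Real.sign_of_neg hy, abs_of_neg hy]
      ring_nf
    have h0 : HasDerivAt (fun y : ℝ => (2/γ) * y) (2/γ) x := by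
      simpa using (hasDerivAt_id x).const_mul (2/γ)
    have hd : HasDerivAt (fun y => -(M * Real.exp ((2/γ) * y)))
        (-(M * (Real.exp ((2/γ) * x) * (2/γ)))) x := ((h0.exp).const_mul M).neg
    rw [hev.deriv_eq, hd.deriv, abs_of_neg h]
    ring_nf
  · have hev : g =ᶠ[𝓝 x] fun y => M * Real.exp (-((2/γ) * y)) := by
      filter_upwards [Ioi_mem_nhds h] with y hy
      rw [hg y, Real.sign_of_pos hy, abs_of_pos hy]
      ring_nf
    have h0 : HasDerivAt (fun y : ℝ => -((2/γ) * y)) (-(2/γ)) x := by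
      have := ((hasDerivAt_id x).const_mul (2/γ)).neg
      simp only [mul_one, id] at this
      exact this
    have hd : HasDerivAt (fun y => M * Real.exp (-((2/γ) * y)))
        (M * (Real.exp (-((2/γ) * x)) * (-(2/γ)))) x := (h0.exp).const_mul M
    rw [hev.deriv_eq, hd.deriv, abs_of_pos h]
    ring_nf

end Stmt16

/-- Linear limit λ → 0+ at fixed mass ρ of the antisymmetric stationary state of the cubic
NLS with a delta-prime interaction of strength γ: φ_λ converges strongly in
H¹(ℝ⁻) ⊕ H¹(ℝ⁺) to the linear ground state sgn(x)·√(2ρ/γ)·e^{−(2/γ)|x|} of the delta-prime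
Hamiltonian of mass ρ. -/
theorem statement16 (γ ρ : ℝ) (hγ : 0 < γ) (hρ : 0 < ρ)
    (s xb : ℝ → ℝ)
    (hs : ∀ lam, s lam = lam * ρ / 4 + 2 / γ)
    (hxb : ∀ lam, xb lam = (1 / (2 * s lam)) *
      Real.log ((γ * s lam + 2) / (γ * s lam - 2)))
    (φ : ℝ → ℝ → ℝ)
    (hφ : ∀ lam x, φ lam x = if x < 0
      then -(Real.sqrt (2 * (s lam) ^ 2 / lam) * sech (s lam * (x - xb lam)))
      else Real.sqrt (2 * (s lam) ^ 2 / lam) * sech (s lam * (x + xb lam)))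
    (g : ℝ → ℝ)
    (hg : ∀ x, g x = Real.sign x * Real.sqrt (2 * ρ / γ) * Real.exp (-(2 / γ) * |x|)) :
    Tendsto (fun lam : ℝ =>
        (∫ x : ℝ, (φ lam x - g x) ^ 2)
          + ∫ x in ({(0:ℝ)}ᶜ : Set ℝ), (deriv (φ lam) x - deriv g x) ^ 2)
      (𝓝[>] 0) (𝓝 0) := by
  classical
  have hMpos : 0 < Real.sqrt (2 * ρ / γ) := Real.sqrt_pos.2 (by positivity)
  have hcpos : 0 < Real.sqrt (γ * ρ / 2) := Real.sqrt_pos.2 (by positivity)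
  have hs₁pos : (0:ℝ) < ρ/4 + 2/γ := by positivity
  -- closed form of φ
  have hφF : ∀ lam, 0 < lam → ∀ x, φ lam x =
      if x < 0 then -(Stmt16.Fa γ ρ (s lam) (-x)) else Stmt16.Fa γ ρ (s lam) x := by
    intro lam hlam x
    have hkey : ∀ y, Real.sqrt (2 * (s lam) ^ 2 / lam) * sech (s lam * (y + xb lam))
        = Stmt16.Fa γ ρ (s lam) y := by
      intro y
      rw [hxb lam]
      exact Stmt16.key hγ hρ hlam (hs lam) y
    rw [hφ lam x]
    by_cases hx : x < 0
    · rw [if_pos hx, if_pos hx, ← hkey (-x)]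
      rw [show s lam * (x - xb lam) = -(s lam * (-x + xb lam)) by ring]
      unfold sech
      rw [Real.cosh_neg]
    · rw [if_neg hx, if_neg hx, ← hkey x]
  -- basic facts about s
  have hs2 : ∀ lam ∈ Ioc (0:ℝ) 1, 2 ≤ γ * s lam := by
    intro lam hlam
    rw [hs lam, mul_add, Stmt16.gs_eq hγ]
    have h0 : 0 < γ * (lam * ρ / 4) :=
      mul_pos hγ (div_pos (mul_pos hlam.1 hρ) (by norm_num))
    linarith
  have hs_le : ∀ lam ∈ Ioc (0:ℝ) 1, s lam ≤ ρ/4 + 2/γ := by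
    intro lam hlam
    rw [hs lam]
    have h2 := hlam.2
    have : lam * ρ ≤ 1 * ρ := mul_le_mul_of_nonneg_right h2 hρ.le
    linarith
  have hsT : Tendsto s (𝓝[>] (0:ℝ)) (𝓝 (2/γ)) := by
    have hc : Continuous s := by
      have : s = fun lam => lam * ρ / 4 + 2 / γ := funext hs
      rw [this]; fun_prop
    have h0 : s 0 = 2/γ := by rw [hs]; ring
    have := hc.tendsto 0
    rw [h0] at this
    exact this.mono_left nhdsWithin_le_nhds
  -- pointwise convergence building blocks
  have hFaT : ∀ x : ℝ, Tendsto (fun lam => Stmt16.Fa γ ρ (s lam) x) (𝓝[>] 0)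
      (𝓝 (Real.sqrt (2 * ρ / γ) * Real.exp (-((2/γ) * x)))) := by
    intro x
    have h := ((Stmt16.continuousAt_Fa ρ hγ x).tendsto).comp hsT
    rw [Stmt16.Fa_lim hγ hρ x] at h
    exact h
  have hFdaT : ∀ x : ℝ, Tendsto (fun lam => Stmt16.Fda γ ρ (s lam) x) (𝓝[>] 0)
      (𝓝 (-((2/γ) * (Real.sqrt (2 * ρ / γ) * Real.exp (-((2/γ) * x)))))) := by
    intro x
    have h := ((Stmt16.continuousAt_Fda ρ hγ x).tendsto).comp hsT
    rw [Stmt16.Fda_lim hγ hρ x] at h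
    exact h
  -- uniform bounds
  have hFle : ∀ lam ∈ Ioc (0:ℝ) 1, ∀ y : ℝ, 0 ≤ y → Stmt16.Fa γ ρ (s lam) y
      ≤ ((ρ/4 + 2/γ) * Real.sqrt (γ * ρ / 2)) * Real.exp (-((2/γ) * y)) := by
    intro lam hlam y hy
    refine (Stmt16.Fa_le hγ (hs2 lam hlam) hy).trans ?_
    have h1 := hs_le lam hlam
    have h2 := Real.exp_pos (-((2/γ) * y))
    exact mul_le_mul_of_nonneg_right (mul_le_mul_of_nonneg_right h1 hcpos.le) h2.le
  have hφ_bd : ∀ lam ∈ Ioc (0:ℝ) 1, ∀ x : ℝ, |φ lam x|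
      ≤ ((ρ/4 + 2/γ) * Real.sqrt (γ * ρ / 2)) * Real.exp (-((2/γ) * |x|)) := by
    intro lam hlam x
    have h2 := hs2 lam hlam
    rw [hφF lam hlam.1 x]
    by_cases hx : x < 0
    · rw [if_pos hx, abs_neg, abs_of_nonneg (Stmt16.Fa_nonneg ρ hγ h2 _), abs_of_neg hx]
      exact hFle lam hlam (-x) (by linarith)
    · rw [if_neg hx, abs_of_nonneg (Stmt16.Fa_nonneg ρ hγ h2 _),
        abs_of_nonneg (not_lt.1 hx)]
      exact hFle lam hlam x (not_lt.1 hx)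
  have hg_bd : ∀ x : ℝ, |g x| ≤ Real.sqrt (2 * ρ / γ) * Real.exp (-((2/γ) * |x|)) := by
    intro x
    rw [hg x, abs_mul, abs_mul, abs_of_pos (Real.exp_pos _),
      abs_of_nonneg (Real.sqrt_nonneg _),
      show -((2/γ) * |x|) = -(2/γ) * |x| by ring]
    have h1 := Stmt16.abs_sign_le x
    have h2 := Real.exp_pos (-(2/γ) * |x|)
    have h3 : |Real.sign x| * Real.sqrt (2 * ρ / γ) * Real.exp (-(2/γ) * |x|)
        ≤ 1 * Real.sqrt (2 * ρ / γ) * Real.exp (-(2/γ) * |x|) :=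
      mul_le_mul_of_nonneg_right (mul_le_mul_of_nonneg_right h1 hMpos.le) h2.le
    linarith
  -- measurability
  have hFa_meas : ∀ lam, Measurable (fun x => Stmt16.Fa γ ρ (s lam) x) := by
    intro lam
    unfold Stmt16.Fa Stmt16.den
    fun_prop
  have hφ_meas : ∀ lam, 0 < lam → Measurable (φ lam) := by
    intro lam hlam
    have : φ lam = fun x => if x < 0 then -(Stmt16.Fa γ ρ (s lam) (-x))
        else Stmt16.Fa γ ρ (s lam) x := funext (hφF lam hlam)
    rw [this]
    exact Measurable.ite measurableSet_Iio
      (((hFa_meas lam).comp measurable_neg).neg) (hFa_meas lam)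
  have hg_meas : Measurable g := by
    have : g = fun x => Real.sign x * Real.sqrt (2 * ρ / γ)
        * Real.exp (-(2/γ) * |x|) := funext hg
    rw [this]
    exact (Stmt16.measurable_sign'.mul measurable_const).mul
      (Real.measurable_exp.comp (measurable_const.mul measurable_abs))
  have hae : ∀ᵐ x : ℝ ∂(volume : Measure ℝ), x ≠ 0 := by
    have hsingl : {x : ℝ | ¬ x ≠ 0} = {0} := by ext y; simp
    rw [ae_iff, hsingl]
    exact measure_singleton 0
  have hsq : ∀ u : ℝ, (Real.exp (-((2/γ) * u)))^2 = Real.exp (-(4/γ) * u) := by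
    intro u; rw [sq, ← Real.exp_add]; congr 1; ring
  have hIoc : Ioc (0:ℝ) 1 ∈ 𝓝[>] (0:ℝ) :=
    Ioc_mem_nhdsGT_of_mem (by constructor <;> norm_num)
  -- Part 1: L² convergence
  have T1 : Tendsto (fun lam => ∫ x : ℝ, (φ lam x - g x)^2) (𝓝[>] 0) (𝓝 0) := by
    have hmain := MeasureTheory.tendsto_integral_filter_of_dominated_convergence
      (μ := (volume : Measure ℝ)) (l := 𝓝[>] (0:ℝ))
      (F := fun lam x => (φ lam x - g x)^2) (f := fun _ => (0:ℝ))
      (bound := fun x => ((ρ/4 + 2/γ) * Real.sqrt (γ * ρ / 2) + Real.sqrt (2 * ρ / γ))^2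
        * Real.exp (-(4/γ) * |x|))
      ?_ ?_ ?_ ?_
    · simpa using hmain
    · filter_upwards [self_mem_nhdsWithin] with lam hlam
      exact (((hφ_meas lam hlam).sub hg_meas).pow_const 2).aestronglyMeasurable
    · filter_upwards [hIoc] with lam hlam
      refine ae_of_all _ fun x => ?_
      have h1 := hφ_bd lam hlam x
      have h2 := hg_bd x
      have habs : |φ lam x - g x| ≤ ((ρ/4 + 2/γ) * Real.sqrt (γ * ρ / 2)
          + Real.sqrt (2 * ρ / γ)) * Real.exp (-((2/γ) * |x|)) := by
        refine (abs_sub _ _).trans ?_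
        rw [add_mul]
        linarith
      rw [Real.norm_eq_abs, abs_of_nonneg (sq_nonneg _)]
      calc (φ lam x - g x)^2 = |φ lam x - g x|^2 := (sq_abs _).symm
        _ ≤ (((ρ/4 + 2/γ) * Real.sqrt (γ * ρ / 2) + Real.sqrt (2 * ρ / γ))
            * Real.exp (-((2/γ) * |x|)))^2 := pow_le_pow_left₀ (abs_nonneg _) habs 2
        _ = _ := by rw [mul_pow, hsq]
    · exact (Stmt16.integrable_exp_neg_abs (by positivity : (0:ℝ) < 4/γ)).const_mul _
    · filter_upwards [hae] with x hx
      have hφT : Tendsto (fun lam => φ lam x) (𝓝[>] 0) (𝓝 (g x)) := by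
        rcases hx.lt_or_gt with h|h
        · have hlim := (hFaT (-x)).neg
          rw [show -(Real.sqrt (2 * ρ / γ) * Real.exp (-((2/γ) * -x))) = g x by
            rw [hg x, Real.sign_of_neg h, abs_of_neg h]; ring_nf] at hlim
          apply Tendsto.congr' _ hlim
          filter_upwards [self_mem_nhdsWithin] with lam hlam
          rw [hφF lam hlam x, if_pos h]
        · have hlim := hFaT x
          rw [show Real.sqrt (2 * ρ / γ) * Real.exp (-((2/γ) * x)) = g x by
            rw [hg x, Real.sign_of_pos h, abs_of_pos h]; ring_nf] at hlim
          apply Tendsto.congr' _ hlim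
          filter_upwards [self_mem_nhdsWithin] with lam hlam
          rw [hφF lam hlam x, if_neg (not_lt.2 h.le)]
      have := (hφT.sub (tendsto_const_nhds (x := g x))).pow 2
      simpa using this
  -- derivative identities
  have hdφ : ∀ lam ∈ Ioc (0:ℝ) 1, ∀ x : ℝ, x ≠ 0 → deriv (φ lam) x =
      if x < 0 then Stmt16.Fda γ ρ (s lam) (-x) else Stmt16.Fda γ ρ (s lam) x := by
    intro lam hlam x hx
    have h2 := hs2 lam hlam
    rcases hx.lt_or_gt with h|h
    · have hev : φ lam =ᶠ[𝓝 x] fun y => -(Stmt16.Fa γ ρ (s lam) (-y)) := by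
        filter_upwards [Iio_mem_nhds h] with y hy
        rw [hφF lam hlam.1 y, if_pos (mem_Iio.1 hy)]
      have h1 : HasDerivAt (fun y => Stmt16.Fa γ ρ (s lam) (-y))
          (Stmt16.Fda γ ρ (s lam) (-x) * (-1)) x :=
        (Stmt16.hasDerivAt_Fa ρ h2 (-x)).comp x (hasDerivAt_neg x)
      have hd : HasDerivAt (fun y => -(Stmt16.Fa γ ρ (s lam) (-y)))
          (Stmt16.Fda γ ρ (s lam) (-x)) x := by
        have := h1.neg
        refine this.congr_deriv ?_
        ring
      rw [hev.deriv_eq, hd.deriv, if_pos h]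
    · have hev : φ lam =ᶠ[𝓝 x] fun y => Stmt16.Fa γ ρ (s lam) y := by
        filter_upwards [Ioi_mem_nhds h] with y hy
        rw [hφF lam hlam.1 y, if_neg (not_lt.2 (mem_Ioi.1 hy).le)]
      rw [hev.deriv_eq, (Stmt16.hasDerivAt_Fa ρ h2 x).deriv, if_neg (not_lt.2 h.le)]
  -- bound on deriv φ
  have hdφ_bd : ∀ lam ∈ Ioc (0:ℝ) 1, ∀ x : ℝ, x ≠ 0 → |deriv (φ lam) x|
      ≤ (ρ/4 + 2/γ) * ((ρ/4 + 2/γ) * Real.sqrt (γ * ρ / 2)) * Real.exp (-((2/γ) * |x|)) := by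
    intro lam hlam x hx
    have h2 := hs2 lam hlam
    have hσ := Stmt16.sigma_pos hγ h2
    have hsl := hs_le lam hlam
    rw [hdφ lam hlam x hx]
    have hgen : ∀ y : ℝ, 0 ≤ y → |Stmt16.Fda γ ρ (s lam) y|
        ≤ (ρ/4 + 2/γ) * ((ρ/4 + 2/γ) * Real.sqrt (γ * ρ / 2)) * Real.exp (-((2/γ) * y)) := by
      intro y hy
      refine (Stmt16.Fda_abs_le hγ h2 y).trans ?_
      have hF1 := hFle lam hlam y hy
      have hF0 := Stmt16.Fa_nonneg ρ hγ h2 y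
      have hexp := Real.exp_pos (-((2/γ) * y))
      calc s lam * Stmt16.Fa γ ρ (s lam) y
          ≤ (ρ/4 + 2/γ) * Stmt16.Fa γ ρ (s lam) y := by nlinarith
        _ ≤ _ := by rw [mul_assoc]; nlinarith
    by_cases h : x < 0
    · rw [if_pos h, abs_of_neg h]
      exact hgen (-x) (by linarith)
    · rw [if_neg h, abs_of_nonneg (not_lt.1 h)]
      exact hgen x (not_lt.1 h)
  -- bound on deriv g
  have hdg_bd : ∀ x : ℝ, x ≠ 0 → |deriv g x|
      ≤ (2/γ) * Real.sqrt (2 * ρ / γ) * Real.exp (-((2/γ) * |x|)) := by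
    intro x hx
    rw [Stmt16.deriv_g g hg hx, abs_neg,
      show -(2/γ) * |x| = -((2/γ) * |x|) by ring]
    rw [abs_of_nonneg (by positivity)]
  -- Part 2: derivative convergence
  have T2 : Tendsto (fun lam => ∫ x : ℝ, (deriv (φ lam) x - deriv g x)^2) (𝓝[>] 0) (𝓝 0) := by
    have hmain := MeasureTheory.tendsto_integral_filter_of_dominated_convergence
      (μ := (volume : Measure ℝ)) (l := 𝓝[>] (0:ℝ))
      (F := fun lam x => (deriv (φ lam) x - deriv g x)^2) (f := fun _ => (0:ℝ))
      (bound := fun x => ((ρ/4 + 2/γ) * ((ρ/4 + 2/γ) * Real.sqrt (γ * ρ / 2))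
        + (2/γ) * Real.sqrt (2 * ρ / γ))^2 * Real.exp (-(4/γ) * |x|))
      ?_ ?_ ?_ ?_
    · simpa using hmain
    · filter_upwards [self_mem_nhdsWithin] with lam hlam
      exact (((measurable_deriv _).sub (measurable_deriv _)).pow_const 2).aestronglyMeasurable
    · filter_upwards [hIoc] with lam hlam
      filter_upwards [hae] with x hx
      have h1 := hdφ_bd lam hlam x hx
      have h2 := hdg_bd x hx
      have habs : |deriv (φ lam) x - deriv g x|
          ≤ ((ρ/4 + 2/γ) * ((ρ/4 + 2/γ) * Real.sqrt (γ * ρ / 2))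
            + (2/γ) * Real.sqrt (2 * ρ / γ)) * Real.exp (-((2/γ) * |x|)) := by
        refine (abs_sub _ _).trans ?_
        rw [add_mul]
        linarith
      rw [Real.norm_eq_abs, abs_of_nonneg (sq_nonneg _)]
      calc (deriv (φ lam) x - deriv g x)^2 = |deriv (φ lam) x - deriv g x|^2 := (sq_abs _).symm
        _ ≤ (((ρ/4 + 2/γ) * ((ρ/4 + 2/γ) * Real.sqrt (γ * ρ / 2))
            + (2/γ) * Real.sqrt (2 * ρ / γ)) * Real.exp (-((2/γ) * |x|)))^2 :=
          pow_le_pow_left₀ (abs_nonneg _) habs 2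
        _ = _ := by rw [mul_pow, hsq]
    · exact (Stmt16.integrable_exp_neg_abs (by positivity : (0:ℝ) < 4/γ)).const_mul _
    · filter_upwards [hae] with x hx
      have hgd := Stmt16.deriv_g g hg hx
      have hφT : Tendsto (fun lam => deriv (φ lam) x) (𝓝[>] 0) (𝓝 (deriv g x)) := by
        rcases hx.lt_or_gt with h|h
        · have hlim := hFdaT (-x)
          rw [show -((2/γ) * (Real.sqrt (2 * ρ / γ) * Real.exp (-((2/γ) * -x)))) = deriv g x by
            rw [hgd, abs_of_neg h]; ring_nf] at hlim
          apply Tendsto.congr' _ hlim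
          filter_upwards [hIoc] with lam hlam
          rw [hdφ lam hlam x hx.symm.symm, if_pos h]
        · have hlim := hFdaT x
          rw [show -((2/γ) * (Real.sqrt (2 * ρ / γ) * Real.exp (-((2/γ) * x)))) = deriv g x by
            rw [hgd, abs_of_pos h]; ring_nf] at hlim
          apply Tendsto.congr' _ hlim
          filter_upwards [hIoc] with lam hlam
          rw [hdφ lam hlam x hx, if_neg (not_lt.2 h.le)]
      have := (hφT.sub (tendsto_const_nhds (x := deriv g x))).pow 2
      simpa using this
  -- conclusion
  have hset : (fun lam : ℝ => (∫ x : ℝ, (φ lam x - g x)^2)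
      + ∫ x in ({(0:ℝ)}ᶜ : Set ℝ), (deriv (φ lam) x - deriv g x)^2)
      = fun lam : ℝ => (∫ x : ℝ, (φ lam x - g x)^2)
      + ∫ x : ℝ, (deriv (φ lam) x - deriv g x)^2 := by
    funext lam
    rw [MeasureTheory.restrict_compl_singleton]
  rw [hset]
  simpa using T1.add T2


end
end

section
/- Fix λ > 0 and ρ > 0. For γ > 0, set √ω_γ := (2γλρ + 4 − √(γ²λ²ρ² + 4γλρ + 16))/(6γ), let (t₁, t₂) be the solution of the system T₊ with parameters γ and ω_γ, i.e. t₁ = (1 − √(1 + γ²ω_γ) + √(γ²ω_γ − 2 + 2√(1 + γ²ω_γ)))/(2γ√ω_γ), t₂ = (−1 + √(1 + γ²ω_γ) + √(γ²ω_γ − 2 + 2√(1 + γ²ω_γ)))/(2γ√ω_γ), set x_i := (1/(2√ω_γ))·log((1 + t_i)/(1 − t_i)), and define ψ_γ(x) := √(2ω_γ/λ)·sech(√ω_γ(x − x₁)) for x < 0 and ψ_γ(x) := √(2ω_γ/λ)·sech(√ω_γ(x − x₂)) for x > 0. Let g(x) := (ρ√λ/(2√2))·sech((λρ/4)x − (1/2)log(3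 + 2√2)). Then, as γ → 0+, ∫_ℝ |ψ_γ(x) − g(x)|² dx + ∫_{ℝ∖{0}} |ψ_γ'(x) − g'(x)|² dx → 0; i.e., ψ_γ converges strongly in H¹(ℝ⁻) ⊕ H¹(ℝ⁺) to a shifted free soliton. -/
open MeasureTheory Real Filter Set Topology

noncomputable section

lemma sech_pos (x : ℝ) : 0 < sech x := by unfold sech; positivity

lemma continuous_sech : Continuous sech :=
  continuous_const.div Real.continuous_cosh fun x => (Real.cosh_pos x).ne'

lemma sech_le_two_exp (x : ℝ) : sech x ≤ 2 * Real.exp (-|x|) := by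
  have hc := Real.cosh_pos x
  have he := Real.exp_pos |x|
  have h : Real.exp |x| ≤ 2 * Real.cosh x := by
    rw [Real.cosh_eq]
    rcases abs_cases x with ⟨h1, _⟩ | ⟨h1, _⟩ <;> rw [h1] <;>
      nlinarith [Real.exp_pos x, Real.exp_pos (-x)]
  unfold sech
  rw [Real.exp_neg, div_le_iff₀ hc]
  rw [show 2 * (Real.exp |x|)⁻¹ * Real.cosh x = 2 * Real.cosh x / Real.exp |x| by ring,
    le_div_iff₀ he]
  linarith

lemma abs_sinh_le_cosh (x : ℝ) : |Real.sinh x| ≤ Real.cosh x := by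
  have h := Real.cosh_sq x
  have hc := Real.cosh_pos x
  rw [abs_le]
  constructor <;> nlinarith

lemma abs_dsech (u : ℝ) : |(-(Real.sinh u / Real.cosh u ^ 2))| ≤ sech u := by
  have hc := Real.cosh_pos u
  rw [abs_neg, abs_div, abs_of_pos (by positivity : (0:ℝ) < Real.cosh u ^ 2)]
  unfold sech
  rw [div_le_div_iff₀ (by positivity) hc]
  nlinarith [abs_sinh_le_cosh u]

lemma hasDerivAt_sech (u : ℝ) :
    HasDerivAt sech (-(Real.sinh u / Real.cosh u ^ 2)) u := by
  have h := (hasDerivAt_const u (1:ℝ)).div (Real.hasDerivAt_cosh u) (Real.cosh_pos u).ne'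
  have e : (0 * Real.cosh u - 1 * Real.sinh u) / Real.cosh u ^ 2
      = -(Real.sinh u / Real.cosh u ^ 2) := by ring
  rw [e] at h
  exact h

lemma hasDerivAt_csech (c s d x : ℝ) :
    HasDerivAt (fun y => c * sech (s * (y - d)))
      (c * (-(Real.sinh (s * (x - d)) / Real.cosh (s * (x - d)) ^ 2) * s)) x := by
  have h1 : HasDerivAt (fun y : ℝ => s * (y - d)) s x := by
    simpa using ((hasDerivAt_id x).sub_const d).const_mul s
  exact ((hasDerivAt_sech (s * (x - d))).comp x h1).const_mul c

lemma integrable_exp_neg_mul_abs {b : ℝ} (hb : 0 < b) :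
    Integrable (fun x : ℝ => Real.exp (-(b * |x|))) := by
  have h1 : IntegrableOn (fun x : ℝ => Real.exp (-(b * |x|))) (Ioi 0) := by
    refine (exp_neg_integrableOn_Ioi 0 hb).congr_fun (fun x hx => ?_) measurableSet_Ioi
    rw [abs_of_pos hx]; simp only [neg_mul]
  rw [← integrableOn_univ, ← @Iio_union_Ici _ _ (0 : ℝ), integrableOn_union,
    integrableOn_Ici_iff_integrableOn_Ioi]
  refine ⟨?_, h1⟩
  rw [← (Measure.measurePreserving_neg (volume : Measure ℝ)).integrableOn_comp_preimage
      (Homeomorph.neg ℝ).measurableEmbedding]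
  simpa [Function.comp_def] using h1

lemma sech_shift_bound {m s d K x : ℝ} (hm : 0 < m) (hms : m ≤ s) (hd : |d| ≤ K) :
    sech (s * (x - d)) ≤ 2 * (Real.exp (m * K) * Real.exp (-(m * |x|))) := by
  have hs0 : 0 < s := lt_of_lt_of_le hm hms
  have h2 : |x| - |d| ≤ |x - d| := abs_sub_abs_le_abs_sub x d
  have h1 : m * |x| - m * K ≤ |s * (x - d)| := by
    rw [abs_mul, abs_of_pos hs0]
    rcases le_or_gt (|x| - K) 0 with h | h
    · nlinarith [abs_nonneg (x - d)]
    · nlinarith [abs_nonneg (x - d)]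
  calc sech (s * (x - d)) ≤ 2 * Real.exp (-|s * (x - d)|) := sech_le_two_exp _
    _ ≤ 2 * (Real.exp (m * K) * Real.exp (-(m * |x|))) := by
        rw [← Real.exp_add]
        have := Real.exp_le_exp.2 (show -|s * (x - d)| ≤ m * K + -(m * |x|) by linarith)
        linarith

lemma t_sqrt_key {a : ℝ} (ha : 0 < a) :
    Real.sqrt (a ^ 2 - 2 + 2 * Real.sqrt (1 + a ^ 2))
      = a * Real.sqrt ((Real.sqrt (1 + a ^ 2) + 3) / (Real.sqrt (1 + a ^ 2) + 1)) := by
  set b := Real.sqrt (1 + a ^ 2) with hbdef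
  have hb2 : b ^ 2 = 1 + a ^ 2 := Real.sq_sqrt (by positivity)
  have hb1 : 0 ≤ b := Real.sqrt_nonneg _
  have h0 : (0:ℝ) ≤ (b + 3) / (b + 1) := by positivity
  have key : a ^ 2 - 2 + 2 * b = (a * Real.sqrt ((b + 3) / (b + 1))) ^ 2 := by
    rw [mul_pow, Real.sq_sqrt h0]
    field_simp
    nlinarith [hb2]
  rw [key, Real.sqrt_sq (by positivity)]

lemma t1_eq {a : ℝ} (ha : 0 < a) :
    (1 - Real.sqrt (1 + a ^ 2)
        + Real.sqrt (a ^ 2 - 2 + 2 * Real.sqrt (1 + a ^ 2))) / (2 * a)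
      = (-(a / (Real.sqrt (1 + a ^ 2) + 1))
        + Real.sqrt ((Real.sqrt (1 + a ^ 2) + 3) / (Real.sqrt (1 + a ^ 2) + 1))) / 2 := by
  rw [t_sqrt_key ha]
  set b := Real.sqrt (1 + a ^ 2) with hbdef
  have hb2 : b ^ 2 = 1 + a ^ 2 := Real.sq_sqrt (by positivity)
  have hb1 : 0 ≤ b := Real.sqrt_nonneg _
  field_simp
  ring_nf
  nlinarith [hb2]

lemma t2_eq {a : ℝ} (ha : 0 < a) :
    (-1 + Real.sqrt (1 + a ^ 2)
        + Real.sqrt (a ^ 2 - 2 + 2 * Real.sqrt (1 + a ^ 2))) / (2 * a)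
      = (a / (Real.sqrt (1 + a ^ 2) + 1)
        + Real.sqrt ((Real.sqrt (1 + a ^ 2) + 3) / (Real.sqrt (1 + a ^ 2) + 1))) / 2 := by
  rw [t_sqrt_key ha]
  set b := Real.sqrt (1 + a ^ 2) with hbdef
  have hb2 : b ^ 2 = 1 + a ^ 2 := Real.sq_sqrt (by positivity)
  have hb1 : 0 ≤ b := Real.sqrt_nonneg _
  field_simp
  ring_nf
  nlinarith [hb2]

set_option maxHeartbeats 2000000 in
/-- No-defect limit γ → 0+ at fixed mass ρ of the asymmetric non-sign-changing stationary
state of the cubic NLS with a delta-prime interaction: ψ_γ converges strongly in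
H¹(ℝ⁻) ⊕ H¹(ℝ⁺) to a shifted free soliton. Here `s γ = √ω_γ`. -/
theorem statement17 (lam ρ : ℝ) (hlam : 0 < lam) (hρ : 0 < ρ)
    (s t₁ t₂ x₁ x₂ : ℝ → ℝ)
    (hs : ∀ γ, s γ = (2 * γ * lam * ρ + 4
        - Real.sqrt (γ ^ 2 * lam ^ 2 * ρ ^ 2 + 4 * γ * lam * ρ + 16)) / (6 * γ))
    (ht₁ : ∀ γ, t₁ γ = (1 - Real.sqrt (1 + (γ * s γ) ^ 2)
        + Real.sqrt ((γ * s γ) ^ 2 - 2 + 2 * Real.sqrt (1 + (γ * s γ) ^ 2)))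
      / (2 * γ * s γ))
    (ht₂ : ∀ γ, t₂ γ = (-1 + Real.sqrt (1 + (γ * s γ) ^ 2)
        + Real.sqrt ((γ * s γ) ^ 2 - 2 + 2 * Real.sqrt (1 + (γ * s γ) ^ 2)))
      / (2 * γ * s γ))
    (hx₁ : ∀ γ, x₁ γ = (1 / (2 * s γ)) * Real.log ((1 + t₁ γ) / (1 - t₁ γ)))
    (hx₂ : ∀ γ, x₂ γ = (1 / (2 * s γ)) * Real.log ((1 + t₂ γ) / (1 - t₂ γ)))
    (ψ : ℝ → ℝ → ℝ)
    (hψ : ∀ γ x, ψ γ x = if x < 0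
      then Real.sqrt (2 * (s γ) ^ 2 / lam) * sech (s γ * (x - x₁ γ))
      else Real.sqrt (2 * (s γ) ^ 2 / lam) * sech (s γ * (x - x₂ γ)))
    (g : ℝ → ℝ)
    (hg : ∀ x, g x = (ρ * Real.sqrt lam / (2 * Real.sqrt 2)) *
      sech ((lam * ρ / 4) * x - (1 / 2) * Real.log (3 + 2 * Real.sqrt 2))) :
    Tendsto (fun γ : ℝ =>
        (∫ x : ℝ, (ψ γ x - g x) ^ 2)
          + ∫ x in ({(0:ℝ)}ᶜ : Set ℝ), (deriv (ψ γ) x - deriv g x) ^ 2)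
      (𝓝[>] 0) (𝓝 0) := by
  -- ## Notation
  set l : Filter ℝ := 𝓝[>] (0:ℝ) with hldef
  set s₀ : ℝ := lam * ρ / 4 with hs₀def
  have hs₀pos : 0 < s₀ := by rw [hs₀def]; positivity
  set xstar : ℝ := 1 / (2 * s₀) * Real.log (3 + 2 * Real.sqrt 2) with hxstardef
  set c₀ : ℝ := Real.sqrt (2 * s₀ ^ 2 / lam) with hc₀def
  -- ## Step 1 : Tendsto s l (𝓝 s₀)
  have hstend : Tendsto s l (𝓝 s₀) := by
    set S : ℝ → ℝ := fun γ => lam * ρ * (γ * lam * ρ + 4)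
        / (2 * (2 * γ * lam * ρ + 4 + Real.sqrt (γ ^ 2 * lam ^ 2 * ρ ^ 2 + 4 * γ * lam * ρ + 16)))
      with hSdef
    have h16 : Real.sqrt 16 = 4 := by
      rw [show (16:ℝ) = 4 ^ 2 by norm_num, Real.sqrt_sq (by norm_num)]
    have hScont : ContinuousAt S 0 := by
      apply ContinuousAt.div
      · fun_prop
      · exact (continuous_const.mul ((by fun_prop : Continuous fun γ : ℝ =>
          2 * γ * lam * ρ + 4).add (Real.continuous_sqrt.comp (by fun_prop)))).continuousAt
      · simp only [mul_zero, zero_mul, zero_add, add_zero]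
        norm_num [h16]
    have hS0 : S 0 = s₀ := by
      simp only [hSdef, mul_zero, zero_mul, zero_add, add_zero]
      norm_num [h16]
      rw [hs₀def]; ring
    have hST : Tendsto S l (𝓝 s₀) := by
      rw [← hS0]
      exact hScont.tendsto.mono_left nhdsWithin_le_nhds
    refine hST.congr' ?_
    filter_upwards [self_mem_nhdsWithin] with γ (hγ : (0:ℝ) < γ)
    rw [hs γ, hSdef]
    have hX : (0:ℝ) ≤ γ ^ 2 * lam ^ 2 * ρ ^ 2 + 4 * γ * lam * ρ + 16 := by positivity
    have hsq := Real.sq_sqrt hX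
    have hden : (0:ℝ) < 2 * γ * lam * ρ + 4
        + Real.sqrt (γ ^ 2 * lam ^ 2 * ρ ^ 2 + 4 * γ * lam * ρ + 16) := by positivity
    have hγ' : γ ≠ 0 := hγ.ne'
    field_simp
    have hsq' : Real.sqrt (lam * ρ * γ * (lam * ρ * γ + 4) + 16) ^ 2
        = lam * ρ * γ * (lam * ρ * γ + 4) + 16 := Real.sq_sqrt (by positivity)
    nlinarith [hsq, hsq']
  -- ## Step 2 : a γ := γ * s γ → 0, eventually positive
  have hγto0 : Tendsto (fun γ : ℝ => γ) l (𝓝 0) := tendsto_id.mono_left nhdsWithin_le_nhds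
  have hato0 : Tendsto (fun γ => γ * s γ) l (𝓝 0) := by
    simpa using hγto0.mul hstend
  have hspos : ∀ᶠ γ in l, 0 < s γ := hstend.eventually (eventually_gt_nhds hs₀pos)
  have hapos : ∀ᶠ γ in l, 0 < γ * s γ := by
    filter_upwards [hspos, self_mem_nhdsWithin] with γ h1 (h2 : (0:ℝ) < γ)
    positivity
  -- ## Step 3 : t₁, t₂ → √2/2
  have hbt : Tendsto (fun γ => Real.sqrt (1 + (γ * s γ) ^ 2)) l (𝓝 1) := by
    have h1 : Tendsto (fun γ => 1 + (γ * s γ) ^ 2) l (𝓝 1) := by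
      simpa using tendsto_const_nhds.add (hato0.pow 2)
    simpa [Real.sqrt_one, Function.comp_def] using Real.continuous_sqrt.continuousAt.tendsto.comp h1
  have hct : Tendsto (fun γ => Real.sqrt ((Real.sqrt (1 + (γ * s γ) ^ 2) + 3)
      / (Real.sqrt (1 + (γ * s γ) ^ 2) + 1))) l (𝓝 (Real.sqrt 2)) := by
    have h1 : Tendsto (fun γ => (Real.sqrt (1 + (γ * s γ) ^ 2) + 3)
        / (Real.sqrt (1 + (γ * s γ) ^ 2) + 1)) l (𝓝 2) := by
      have := (hbt.add (tendsto_const_nhds (x := (3:ℝ)))).div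
        (hbt.add (tendsto_const_nhds (x := (1:ℝ)))) (by norm_num : (1:ℝ) + 1 ≠ 0)
      norm_num at this
      exact this
    exact Real.continuous_sqrt.continuousAt.tendsto.comp h1
  have hfrac : Tendsto (fun γ => (γ * s γ) / (Real.sqrt (1 + (γ * s γ) ^ 2) + 1)) l (𝓝 0) := by
    have := hato0.div (hbt.add (tendsto_const_nhds (x := (1:ℝ)))) (by norm_num : (1:ℝ) + 1 ≠ 0)
    simpa [Pi.div_def] using this
  have ht1tend : Tendsto t₁ l (𝓝 (Real.sqrt 2 / 2)) := by
    have hmain : Tendsto (fun γ => (-((γ * s γ) / (Real.sqrt (1 + (γ * s γ) ^ 2) + 1))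
        + Real.sqrt ((Real.sqrt (1 + (γ * s γ) ^ 2) + 3)
          / (Real.sqrt (1 + (γ * s γ) ^ 2) + 1))) / 2) l (𝓝 ((-(0:ℝ) + Real.sqrt 2) / 2)) :=
      (hfrac.neg.add hct).div_const 2
    rw [show (-(0:ℝ) + Real.sqrt 2) / 2 = Real.sqrt 2 / 2 by ring] at hmain
    refine hmain.congr' ?_
    filter_upwards [hapos] with γ hγ
    rw [ht₁ γ, show 2 * γ * s γ = 2 * (γ * s γ) by ring]
    exact (t1_eq hγ).symm
  have ht2tend : Tendsto t₂ l (𝓝 (Real.sqrt 2 / 2)) := by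
    have hmain : Tendsto (fun γ => ((γ * s γ) / (Real.sqrt (1 + (γ * s γ) ^ 2) + 1)
        + Real.sqrt ((Real.sqrt (1 + (γ * s γ) ^ 2) + 3)
          / (Real.sqrt (1 + (γ * s γ) ^ 2) + 1))) / 2) l (𝓝 (((0:ℝ) + Real.sqrt 2) / 2)) :=
      (hfrac.add hct).div_const 2
    rw [show ((0:ℝ) + Real.sqrt 2) / 2 = Real.sqrt 2 / 2 by ring] at hmain
    refine hmain.congr' ?_
    filter_upwards [hapos] with γ hγ
    rw [ht₂ γ, show 2 * γ * s γ = 2 * (γ * s γ) by ring]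
    exact (t2_eq hγ).symm
  -- ## facts about τ := √2/2
  have hsqrt2 : Real.sqrt 2 ^ 2 = 2 := Real.sq_sqrt (by norm_num)
  have hsqrt2pos : 0 < Real.sqrt 2 := Real.sqrt_pos.2 (by norm_num)
  have hsqrt2lt : Real.sqrt 2 < 2 := by nlinarith
  have hτne : (1:ℝ) - Real.sqrt 2 / 2 ≠ 0 := by nlinarith
  have h3pos : (0:ℝ) < 3 + 2 * Real.sqrt 2 := by positivity
  have hratio : (1 + Real.sqrt 2 / 2) / (1 - Real.sqrt 2 / 2) = 3 + 2 * Real.sqrt 2 := by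
    rw [div_eq_iff hτne]
    nlinarith
  -- ## Step 4 : x₁, x₂ → xstar
  have hx1tend : Tendsto x₁ l (𝓝 xstar) := by
    have hinner : Tendsto (fun γ => (1 + t₁ γ) / (1 - t₁ γ)) l (𝓝 (3 + 2 * Real.sqrt 2)) := by
      rw [← hratio]
      exact (tendsto_const_nhds.add ht1tend).div (tendsto_const_nhds.sub ht1tend) hτne
    have hlog : Tendsto (fun γ => Real.log ((1 + t₁ γ) / (1 - t₁ γ))) l
        (𝓝 (Real.log (3 + 2 * Real.sqrt 2))) :=
      (Real.continuousAt_log h3pos.ne').tendsto.comp hinner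
    have hcoef : Tendsto (fun γ => 1 / (2 * s γ)) l (𝓝 (1 / (2 * s₀))) :=
      tendsto_const_nhds.div (tendsto_const_nhds.mul hstend) (by positivity)
    exact Tendsto.congr (fun γ => (hx₁ γ).symm) (hcoef.mul hlog)
  have hx2tend : Tendsto x₂ l (𝓝 xstar) := by
    have hinner : Tendsto (fun γ => (1 + t₂ γ) / (1 - t₂ γ)) l (𝓝 (3 + 2 * Real.sqrt 2)) := by
      rw [← hratio]
      exact (tendsto_const_nhds.add ht2tend).div (tendsto_const_nhds.sub ht2tend) hτne
    have hlog : Tendsto (fun γ => Real.log ((1 + t₂ γ) / (1 - t₂ γ))) l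
        (𝓝 (Real.log (3 + 2 * Real.sqrt 2))) :=
      (Real.continuousAt_log h3pos.ne').tendsto.comp hinner
    have hcoef : Tendsto (fun γ => 1 / (2 * s γ)) l (𝓝 (1 / (2 * s₀))) :=
      tendsto_const_nhds.div (tendsto_const_nhds.mul hstend) (by positivity)
    exact Tendsto.congr (fun γ => (hx₂ γ).symm) (hcoef.mul hlog)
  -- ## Step 5 : g in sech-shift form
  have hc₀nonneg : 0 ≤ c₀ := Real.sqrt_nonneg _
  have hgeq : ∀ x, g x = c₀ * sech (s₀ * (x - xstar)) := by
    intro x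
    have hc₀eq : c₀ = ρ * Real.sqrt lam / (2 * Real.sqrt 2) := by
      have hsq : (ρ * Real.sqrt lam / (2 * Real.sqrt 2)) ^ 2 = ρ ^ 2 * lam / 8 := by
        rw [div_pow, mul_pow, Real.sq_sqrt hlam.le, mul_pow, hsqrt2]
        ring
      rw [hc₀def, show 2 * s₀ ^ 2 / lam = (ρ * Real.sqrt lam / (2 * Real.sqrt 2)) ^ 2 by
        rw [hsq, hs₀def]; field_simp; ring]
      exact Real.sqrt_sq (by positivity)
    have harg : s₀ * (x - xstar) = lam * ρ / 4 * x - 1 / 2 * Real.log (3 + 2 * Real.sqrt 2) := by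
      rw [hxstardef, hs₀def]
      field_simp
    rw [hg x, ← hc₀eq, ← harg]
  have hgfun : g = fun y => c₀ * sech (s₀ * (y - xstar)) := funext hgeq
  -- ## Step 6 : pointwise convergence of ψ
  have hcγ : Tendsto (fun γ => Real.sqrt (2 * (s γ) ^ 2 / lam)) l (𝓝 c₀) :=
    Real.continuous_sqrt.continuousAt.tendsto.comp
      ((tendsto_const_nhds.mul (hstend.pow 2)).div_const lam)
  have hu1 : ∀ x : ℝ, Tendsto (fun γ => s γ * (x - x₁ γ)) l (𝓝 (s₀ * (x - xstar))) :=
    fun x => hstend.mul (tendsto_const_nhds.sub hx1tend)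
  have hu2 : ∀ x : ℝ, Tendsto (fun γ => s γ * (x - x₂ γ)) l (𝓝 (s₀ * (x - xstar))) :=
    fun x => hstend.mul (tendsto_const_nhds.sub hx2tend)
  have hψpt : ∀ x, Tendsto (fun γ => ψ γ x) l (𝓝 (g x)) := by
    intro x
    rw [hgeq x]
    by_cases hx : x < 0
    · exact Tendsto.congr (fun γ => by simp only [Function.comp_apply]; rw [hψ γ x, if_pos hx])
        (hcγ.mul (continuous_sech.continuousAt.tendsto.comp (hu1 x)))
    · exact Tendsto.congr (fun γ => by simp only [Function.comp_apply]; rw [hψ γ x, if_neg hx])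
        (hcγ.mul (continuous_sech.continuousAt.tendsto.comp (hu2 x)))
  -- ## Step 7 : derivative formulas
  have hψd1 : ∀ γ, ∀ x : ℝ, x < 0 → deriv (ψ γ) x
      = Real.sqrt (2 * (s γ) ^ 2 / lam)
        * (-(Real.sinh (s γ * (x - x₁ γ)) / Real.cosh (s γ * (x - x₁ γ)) ^ 2) * s γ) := by
    intro γ x hx
    have hev : ψ γ =ᶠ[𝓝 x] fun y => Real.sqrt (2 * (s γ) ^ 2 / lam)
        * sech (s γ * (y - x₁ γ)) := by
      filter_upwards [Iio_mem_nhds hx] with y (hy : y < 0)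
      rw [hψ γ y, if_pos hy]
    rw [hev.deriv_eq, (hasDerivAt_csech _ _ _ x).deriv]
  have hψd2 : ∀ γ, ∀ x : ℝ, 0 < x → deriv (ψ γ) x
      = Real.sqrt (2 * (s γ) ^ 2 / lam)
        * (-(Real.sinh (s γ * (x - x₂ γ)) / Real.cosh (s γ * (x - x₂ γ)) ^ 2) * s γ) := by
    intro γ x hx
    have hev : ψ γ =ᶠ[𝓝 x] fun y => Real.sqrt (2 * (s γ) ^ 2 / lam)
        * sech (s γ * (y - x₂ γ)) := by
      filter_upwards [Ioi_mem_nhds hx] with y (hy : 0 < y)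
      rw [hψ γ y, if_neg (not_lt.2 hy.le)]
    rw [hev.deriv_eq, (hasDerivAt_csech _ _ _ x).deriv]
  have hgd : ∀ x : ℝ, deriv g x
      = c₀ * (-(Real.sinh (s₀ * (x - xstar)) / Real.cosh (s₀ * (x - xstar)) ^ 2) * s₀) := by
    intro x
    rw [hgfun]
    exact (hasDerivAt_csech _ _ _ x).deriv
  -- ## Step 8 : pointwise convergence of derivatives (x ≠ 0)
  have hDpt : ∀ x : ℝ, x ≠ 0 → Tendsto (fun γ => deriv (ψ γ) x) l (𝓝 (deriv g x)) := by
    intro x hx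
    rw [hgd x]
    have hcoshne : Real.cosh (s₀ * (x - xstar)) ^ 2 ≠ 0 :=
      pow_ne_zero 2 (Real.cosh_pos _).ne'
    rcases hx.lt_or_gt with hx' | hx'
    · have hneg : Tendsto (fun γ => -(Real.sinh (s γ * (x - x₁ γ))
          / Real.cosh (s γ * (x - x₁ γ)) ^ 2)) l
          (𝓝 (-(Real.sinh (s₀ * (x - xstar)) / Real.cosh (s₀ * (x - xstar)) ^ 2))) :=
        ((Real.continuous_sinh.continuousAt.tendsto.comp (hu1 x)).div
          ((Real.continuous_cosh.continuousAt.tendsto.comp (hu1 x)).pow 2) hcoshne).neg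
      exact Tendsto.congr (fun γ => (hψd1 γ x hx').symm) (hcγ.mul (hneg.mul hstend))
    · have hneg : Tendsto (fun γ => -(Real.sinh (s γ * (x - x₂ γ))
          / Real.cosh (s γ * (x - x₂ γ)) ^ 2)) l
          (𝓝 (-(Real.sinh (s₀ * (x - xstar)) / Real.cosh (s₀ * (x - xstar)) ^ 2))) :=
        ((Real.continuous_sinh.continuousAt.tendsto.comp (hu2 x)).div
          ((Real.continuous_cosh.continuousAt.tendsto.comp (hu2 x)).pow 2) hcoshne).neg
      exact Tendsto.congr (fun γ => (hψd2 γ x hx').symm) (hcγ.mul (hneg.mul hstend))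
  -- ## Step 9 : eventual uniform bounds
  set m : ℝ := s₀ / 2 with hmdef
  set M : ℝ := 2 * s₀ with hMdef
  set K : ℝ := |xstar| + 1 with hKdef
  have hmpos : 0 < m := by rw [hmdef]; positivity
  have hms₀ : m ≤ s₀ := by rw [hmdef]; linarith
  have hs₀M : s₀ ≤ M := by rw [hMdef]; linarith
  have hxstarK : |xstar| ≤ K := by rw [hKdef]; linarith
  have hE : ∀ᶠ γ in l, m ≤ s γ ∧ s γ ≤ M ∧ |x₁ γ| ≤ K ∧ |x₂ γ| ≤ K := by
    have e1 := hstend.eventually (eventually_gt_nhds (show m < s₀ by rw [hmdef]; linarith))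
    have e2 := hstend.eventually (eventually_lt_nhds (show s₀ < M by rw [hMdef]; linarith))
    have e3 := hx1tend.abs.eventually (eventually_lt_nhds (show |xstar| < K by
      rw [hKdef]; linarith))
    have e4 := hx2tend.abs.eventually (eventually_lt_nhds (show |xstar| < K by
      rw [hKdef]; linarith))
    filter_upwards [e1, e2, e3, e4] with γ h1 h2 h3 h4
    exact ⟨h1.le, h2.le, h3.le, h4.le⟩
  -- bound constants
  set CM : ℝ := Real.sqrt (2 * M ^ 2 / lam) with hCMdef
  have hCMnonneg : 0 ≤ CM := Real.sqrt_nonneg _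
  set Cb : ℝ := 4 * CM * Real.exp (m * K) with hCbdef
  have hCbnonneg : 0 ≤ Cb := by rw [hCbdef]; positivity
  -- coefficient comparison
  have hcoefle : ∀ γ, m ≤ s γ → s γ ≤ M → Real.sqrt (2 * (s γ) ^ 2 / lam) ≤ CM := by
    intro γ h1 h2
    have hsγ : 0 ≤ s γ := le_trans hmpos.le h1
    rw [hCMdef]
    apply Real.sqrt_le_sqrt
    gcongr
  have hc₀le : c₀ ≤ CM := by
    rw [hc₀def, hCMdef]
    apply Real.sqrt_le_sqrt
    gcongr
  -- ## Step 10 : eventual pointwise bounds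
  have hgbd : ∀ x : ℝ, |g x| ≤ c₀ * (2 * (Real.exp (m * K) * Real.exp (-(m * |x|)))) := by
    intro x
    rw [hgeq x, abs_of_nonneg (mul_nonneg hc₀nonneg (sech_pos _).le)]
    exact mul_le_mul_of_nonneg_left (sech_shift_bound hmpos hms₀ hxstarK) hc₀nonneg
  have hψbd : ∀ᶠ γ in l, ∀ x : ℝ, |ψ γ x - g x| ≤ Cb * Real.exp (-(m * |x|)) := by
    filter_upwards [hE] with γ ⟨h1, h2, h3, h4⟩
    intro x
    have hccle := hcoefle γ h1 h2
    have hcnn : 0 ≤ Real.sqrt (2 * (s γ) ^ 2 / lam) := Real.sqrt_nonneg _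
    have hψb : |ψ γ x| ≤ CM * (2 * (Real.exp (m * K) * Real.exp (-(m * |x|)))) := by
      rw [hψ γ x]
      split_ifs with hx
      · rw [abs_of_nonneg (mul_nonneg hcnn (sech_pos _).le)]
        exact mul_le_mul hccle (sech_shift_bound hmpos h1 h3) (sech_pos _).le hCMnonneg
      · rw [abs_of_nonneg (mul_nonneg hcnn (sech_pos _).le)]
        exact mul_le_mul hccle (sech_shift_bound hmpos h1 h4) (sech_pos _).le hCMnonneg
    have htri : |ψ γ x - g x| ≤ |ψ γ x| + |g x| := by
      have := abs_add_le (ψ γ x) (-(g x))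
      simpa [sub_eq_add_neg] using this
    have hgb := hgbd x
    have hcc : c₀ * (2 * (Real.exp (m * K) * Real.exp (-(m * |x|))))
        ≤ CM * (2 * (Real.exp (m * K) * Real.exp (-(m * |x|)))) :=
      mul_le_mul_of_nonneg_right hc₀le (by positivity)
    have heq : CM * (2 * (Real.exp (m * K) * Real.exp (-(m * |x|))))
        + CM * (2 * (Real.exp (m * K) * Real.exp (-(m * |x|))))
        = Cb * Real.exp (-(m * |x|)) := by rw [hCbdef]; ring
    linarith
  have hDbd : ∀ᶠ γ in l, ∀ x : ℝ, x ≠ 0 →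
      |deriv (ψ γ) x - deriv g x| ≤ M * Cb * Real.exp (-(m * |x|)) := by
    filter_upwards [hE] with γ ⟨h1, h2, h3, h4⟩
    intro x hx
    have hccle := hcoefle γ h1 h2
    have hcnn : 0 ≤ Real.sqrt (2 * (s γ) ^ 2 / lam) := Real.sqrt_nonneg _
    have hMnn : 0 ≤ M := le_trans hs₀pos.le hs₀M
    have hexpnn : (0:ℝ) ≤ 2 * (Real.exp (m * K) * Real.exp (-(m * |x|))) := by positivity
    -- generic estimate for  c * (-(sinh u / cosh u ^ 2) * s)
    have hgen : ∀ (c sv d : ℝ), 0 ≤ c → c ≤ CM → m ≤ sv → sv ≤ M → |d| ≤ K →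
        |c * (-(Real.sinh (sv * (x - d)) / Real.cosh (sv * (x - d)) ^ 2) * sv)|
          ≤ CM * (2 * (Real.exp (m * K) * Real.exp (-(m * |x|))) * M) := by
      intro c sv d hc hcle hm1 hm2 hd
      have hsv : 0 ≤ sv := le_trans hmpos.le hm1
      rw [abs_mul, abs_mul, abs_of_nonneg hc, abs_of_nonneg hsv]
      have h5 : |(-(Real.sinh (sv * (x - d)) / Real.cosh (sv * (x - d)) ^ 2))|
          ≤ 2 * (Real.exp (m * K) * Real.exp (-(m * |x|))) :=
        le_trans (abs_dsech _) (sech_shift_bound hmpos hm1 hd)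
      have e2 : |(-(Real.sinh (sv * (x - d)) / Real.cosh (sv * (x - d)) ^ 2))| * sv
          ≤ 2 * (Real.exp (m * K) * Real.exp (-(m * |x|))) * M :=
        mul_le_mul h5 hm2 hsv hexpnn
      exact mul_le_mul hcle e2 (mul_nonneg (abs_nonneg _) hsv) hCMnonneg
    have hψdb : |deriv (ψ γ) x|
        ≤ CM * (2 * (Real.exp (m * K) * Real.exp (-(m * |x|))) * M) := by
      rcases hx.lt_or_gt with hx' | hx'
      · rw [hψd1 γ x hx']
        exact hgen _ _ _ hcnn hccle h1 h2 h3
      · rw [hψd2 γ x hx']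
        exact hgen _ _ _ hcnn hccle h1 h2 h4
    have hgdb : |deriv g x|
        ≤ CM * (2 * (Real.exp (m * K) * Real.exp (-(m * |x|))) * M) := by
      rw [hgd x]
      exact hgen _ _ _ hc₀nonneg hc₀le hms₀ hs₀M hxstarK
    have htri : |deriv (ψ γ) x - deriv g x| ≤ |deriv (ψ γ) x| + |deriv g x| := by
      have := abs_add_le (deriv (ψ γ) x) (-(deriv g x))
      simpa [sub_eq_add_neg] using this
    have heq : CM * (2 * (Real.exp (m * K) * Real.exp (-(m * |x|))) * M)
        + CM * (2 * (Real.exp (m * K) * Real.exp (-(m * |x|))) * M)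
        = M * Cb * Real.exp (-(m * |x|)) := by rw [hCbdef]; ring
    linarith
  -- ## Step 11 : measurability
  have hψmeas : ∀ γ, Measurable (ψ γ) := by
    intro γ
    have : ψ γ = fun x => if x < 0
        then Real.sqrt (2 * (s γ) ^ 2 / lam) * sech (s γ * (x - x₁ γ))
        else Real.sqrt (2 * (s γ) ^ 2 / lam) * sech (s γ * (x - x₂ γ)) := funext (hψ γ)
    rw [this]
    exact Measurable.ite measurableSet_Iio
      (continuous_const.mul (continuous_sech.comp (by fun_prop))).measurable
      (continuous_const.mul (continuous_sech.comp (by fun_prop))).measurable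
  have hgcont : Continuous g := by
    rw [hgfun]
    exact continuous_const.mul (continuous_sech.comp (by fun_prop))
  -- ## Step 12 : dominated convergence
  have hsetint : ∀ f : ℝ → ℝ, (∫ x in ({(0:ℝ)}ᶜ : Set ℝ), f x) = ∫ x, f x := by
    intro f
    rw [Measure.restrict_congr_set (t := Set.univ) (by simp [ae_eq_univ]),
      Measure.restrict_univ]
  have hae0 : ∀ᵐ x : ℝ, x ≠ 0 := by
    refine ae_iff.mpr ?_
    simpa using (by simp : (volume : Measure ℝ) {(0:ℝ)} = 0)
  have hI1 : Tendsto (fun γ => ∫ x : ℝ, (ψ γ x - g x) ^ 2) l (𝓝 0) := by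
    have h := tendsto_integral_filter_of_dominated_convergence
      (μ := (volume : Measure ℝ)) (l := l)
      (F := fun γ x => (ψ γ x - g x) ^ 2) (f := fun _ => (0:ℝ))
      (fun x => Cb ^ 2 * Real.exp (-(2 * m * |x|)))
      (Eventually.of_forall fun γ =>
        (((hψmeas γ).sub hgcont.measurable).pow_const 2).aestronglyMeasurable)
      ?_ ?_ ?_
    · simpa using h
    · filter_upwards [hψbd] with γ hγ
      refine ae_of_all _ fun x => ?_
      rw [Real.norm_eq_abs, abs_of_nonneg (sq_nonneg _)]
      have h1 := hγ x
      calc (ψ γ x - g x) ^ 2 = |ψ γ x - g x| ^ 2 := (sq_abs _).symm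
        _ ≤ (Cb * Real.exp (-(m * |x|))) ^ 2 := by
            apply pow_le_pow_left₀ (abs_nonneg _) h1
        _ = Cb ^ 2 * Real.exp (-(2 * m * |x|)) := by
            rw [mul_pow, pow_two (Real.exp _), ← Real.exp_add,
              show -(m * |x|) + -(m * |x|) = -(2 * m * |x|) by ring]
    · exact (integrable_exp_neg_mul_abs (by positivity : (0:ℝ) < 2 * m)).const_mul _
    · refine ae_of_all _ fun x => ?_
      have h2 : Tendsto (fun γ => (ψ γ x - g x) ^ 2) l (𝓝 ((g x - g x) ^ 2)) :=
        ((hψpt x).sub (tendsto_const_nhds (x := g x))).pow 2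
      simpa using h2
  have hI2 : Tendsto (fun γ => ∫ x : ℝ, (deriv (ψ γ) x - deriv g x) ^ 2) l (𝓝 0) := by
    have h := tendsto_integral_filter_of_dominated_convergence
      (μ := (volume : Measure ℝ)) (l := l)
      (F := fun γ x => (deriv (ψ γ) x - deriv g x) ^ 2) (f := fun _ => (0:ℝ))
      (fun x => (M * Cb) ^ 2 * Real.exp (-(2 * m * |x|)))
      (Eventually.of_forall fun γ =>
        (((measurable_deriv (ψ γ)).sub (measurable_deriv g)).pow_const 2).aestronglyMeasurable)
      ?_ ?_ ?_
    · simpa using h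
    · filter_upwards [hDbd] with γ hγ
      filter_upwards [hae0] with x hx
      rw [Real.norm_eq_abs, abs_of_nonneg (sq_nonneg _)]
      have h1 := hγ x hx
      calc (deriv (ψ γ) x - deriv g x) ^ 2 = |deriv (ψ γ) x - deriv g x| ^ 2 := (sq_abs _).symm
        _ ≤ (M * Cb * Real.exp (-(m * |x|))) ^ 2 := by
            apply pow_le_pow_left₀ (abs_nonneg _) h1
        _ = (M * Cb) ^ 2 * Real.exp (-(2 * m * |x|)) := by
            rw [mul_pow (M * Cb), pow_two (Real.exp _), ← Real.exp_add,
              show -(m * |x|) + -(m * |x|) = -(2 * m * |x|) by ring]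
    · exact (integrable_exp_neg_mul_abs (by positivity : (0:ℝ) < 2 * m)).const_mul _
    · filter_upwards [hae0] with x hx
      have h2 : Tendsto (fun γ => (deriv (ψ γ) x - deriv g x) ^ 2) l
          (𝓝 ((deriv g x - deriv g x) ^ 2)) :=
        ((hDpt x hx).sub (tendsto_const_nhds (x := deriv g x))).pow 2
      simpa using h2
  have := hI1.add hI2
  simp only [add_zero] at this
  refine this.congr fun γ => ?_
  rw [hsetint]

end
end
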